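/- arXiv:0807.2058 — 3 statements merged into one kernel-verified Lean document; each statement's English description precedes it below -/
import Mathlib

section
/- For every symmetric bilinear form h on an n-dimensional real inner product space (V,g) and every integer k with 0 ≤ k ≤ n, the k-th elementary symmetric function of the eigenvalues of h satisfies σ_k(h) = (1/(k!)²)·c^k h^k, where h^k is the k-th exterior (Kulkarni–Nomizu type) power of h and c^k is the k-fold contraction. -/
/-!
Double forms on an `n`-dimensional real inner product space `(V, g)`, represented
by their components with respect to a (fixed) orthonormal basis: a `(p,q)`-double
form is determined by its values on pairs of increasingly ordered tuples of
distinct basis vectors, i.e. by a function `Finset (Fin n) → Finset (Fin n) → ℝ`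
(supported on pairs of sets of cardinalities `p` and `q`).
-/

open Finset

noncomputable section

abbrev DF (n : ℕ) := Finset (Fin n) → Finset (Fin n) → ℝ

namespace DF

variable {n : ℕ}

/-- The sign of the shuffle placing the increasing enumeration of `A` before that of
`B` and reordering increasingly. -/
def shuffleSign (A B : Finset (Fin n)) : ℝ :=
  (-1 : ℝ) ^ ∑ a ∈ A, (B.filter fun b => b < a).card

/-- The exterior product of double forms (Kulkarni–Nomizu type product), in components. -/
def mul (ω θ : DF n) : DF n := fun S T =>
  ∑ A ∈ S.powerset, ∑ C ∈ T.powerset,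
    shuffleSign A (S \ A) * shuffleSign C (T \ C) * ω A C * θ (S \ A) (T \ C)

/-- The `(0,0)`-double form `1`. -/
def one (n : ℕ) : DF n := fun S T => if S = ∅ ∧ T = ∅ then 1 else 0

/-- Powers `ω^k` of a double form with respect to the exterior product. -/
def pow (ω : DF n) : ℕ → DF n
  | 0 => one n
  | k + 1 => mul (pow ω k) ω

/-- The contraction `c ω`, obtained by summing, over an orthonormal basis, the
insertion of the basis vector as first argument in both slots. -/
def contr (ω : DF n) : DF n := fun S T =>
  ∑ i : Fin n,
    if i ∈ S ∨ i ∈ T then 0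
    else shuffleSign {i} S * shuffleSign {i} T * ω (insert i S) (insert i T)

/-- The iterated contraction `c^r`. -/
def contrN (r : ℕ) (ω : DF n) : DF n := contr^[r] ω

/-- The metric `g` as a `(1,1)`-double form (components in an orthonormal basis). -/
def gm (n : ℕ) : DF n := fun S T => if S = T ∧ S.card = 1 then 1 else 0

/-- The inner product of double forms induced by `g`. -/
def dinner (ω θ : DF n) : ℝ :=
  ∑ S : Finset (Fin n), ∑ T : Finset (Fin n), ω S T * θ S T

/-- The scalar given by a `(0,0)`-double form. -/
def toScalar (ω : DF n) : ℝ := ω ∅ ∅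

open scoped Classical in
/-- `σ_k` of a `(1,1)`-double form: the `k`-th elementary symmetric function of the
eigenvalues of the corresponding self-adjoint endomorphism (whose matrix in the
orthonormal basis is the matrix of components). -/
def sigma (k : ℕ) (ω : DF n) : ℝ :=
  if h : (Matrix.of fun i j => ω {i} {j} : Matrix (Fin n) (Fin n) ℝ).IsHermitian then
    ∑ s ∈ Finset.powersetCard k (Finset.univ : Finset (Fin n)), ∏ i ∈ s, h.eigenvalues i
  else 0

/-- `ω` is a `(p,p)`-double form: its components are supported in bidegree `(p,p)`. -/
def IsDeg (p : ℕ) (ω : DF n) : Prop := ∀ S T, ω S T ≠ 0 → S.card = p ∧ T.card = p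

/-- Symmetry of a double form: `ω(a;b) = ω(b;a)`. -/
def IsSymm (ω : DF n) : Prop := ∀ S T, ω S T = ω T S

/-- The first Bianchi identity for a `(p,p)`-double form (in components): the complete
antisymmetrization over the first `p+1` vector arguments vanishes. -/
def FirstBianchi (p : ℕ) (ω : DF n) : Prop :=
  ∀ U T : Finset (Fin n), U.card = p + 1 → T.card = p - 1 →
    ∑ i ∈ U,
      (if i ∈ T then 0
       else shuffleSign {i} (U.erase i) * shuffleSign {i} T * ω (U.erase i) (insert i T)) = 0

end DF

section Geometry

variable {n : ℕ} {V : Type*} [NormedAddCommGroup V] [InnerProductSpace ℝ V]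

/-- The components, in the orthonormal basis `e`, of a `(p,p)`-double form given as a
function of `p + p` vector arguments. -/
def ofForm (e : OrthonormalBasis (Fin n) ℝ V) (p : ℕ)
    (ω : (Fin p → V) → (Fin p → V) → ℝ) : DF n := fun S T =>
  if h : S.card = p ∧ T.card = p then
    ω (fun i => e ((S.orderIsoOfFin h.1 i : Fin n)))
      (fun i => e ((T.orderIsoOfFin h.2 i : Fin n)))
  else 0

/-- The components of a bilinear form, viewed as a `(1,1)`-double form. -/
def ofBilin (e : OrthonormalBasis (Fin n) ℝ V) (b : V → V → ℝ) : DF n :=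
  ofForm e 1 fun x y => b (x 0) (y 0)

/-- The components of a `(2,2)`-double form given as a function of four vectors. -/
def ofCurv (e : OrthonormalBasis (Fin n) ℝ V) (R : V → V → V → V → ℝ) : DF n :=
  ofForm e 2 fun x y => R (x 0) (x 1) (y 0) (y 1)

/-- Bilinearity of a real-valued function of two vector arguments. -/
def IsBilin (b : V → V → ℝ) : Prop :=
  (∀ (c : ℝ) (x x' y : V), b (c • x + x') y = c * b x y + b x' y) ∧
  (∀ (c : ℝ) (x y y' : V), b x (c • y + y') = c * b x y + b x y')

/-- Symmetry of a bilinear form. -/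
def IsSymmBilin (b : V → V → ℝ) : Prop := ∀ x y, b x y = b y x

/-- An algebraic curvature tensor: a multilinear form of four vectors, antisymmetric
in the first two arguments, symmetric under exchange of the two pairs, and satisfying
the first Bianchi identity. -/
structure IsCurv (R : V → V → V → V → ℝ) : Prop where
  linear : ∀ (c : ℝ) (x x' y z w : V), R (c • x + x') y z w = c * R x y z w + R x' y z w
  antisymm : ∀ x y z w, R x y z w = - R y x z w
  pair_symm : ∀ x y z w, R x y z w = R z w x y
  bianchi : ∀ x y z w, R x y z w + R y z x w + R z x y w = 0

/-- Multilinearity of a real-valued function of `p` vector arguments. -/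
def IsMultilinear (p : ℕ) (f : (Fin p → V) → ℝ) : Prop :=
  ∀ (x : Fin p → V) (i : Fin p) (c : ℝ) (u v : V),
    f (Function.update x i (c • u + v)) =
      c * f (Function.update x i u) + f (Function.update x i v)

/-- A function of `p` vector arguments is alternating. -/
def IsAlt (p : ℕ) (f : (Fin p → V) → ℝ) : Prop :=
  ∀ (x : Fin p → V) (i j : Fin p), i ≠ j → x i = x j → f x = 0

/-- A `(p,p)`-double form, as a function of `p + p` vector arguments:
multilinear and alternating in each of the two blocks of arguments. -/
def IsDoubleForm (p : ℕ) (ω : (Fin p → V) → (Fin p → V) → ℝ) : Prop :=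
  (∀ y, IsMultilinear p fun x => ω x y) ∧ (∀ y, IsAlt p fun x => ω x y) ∧
  (∀ x, IsMultilinear p fun y => ω x y) ∧ (∀ x, IsAlt p fun y => ω x y)

/-- Symmetry of a `(p,p)`-double form: `ω(x;y) = ω(y;x)`. -/
def IsSymmForm (p : ℕ) (ω : (Fin p → V) → (Fin p → V) → ℝ) : Prop := ∀ x y, ω x y = ω y x

/-- The first Bianchi identity for a `(p,p)`-double form of vector arguments:
the complete antisymmetrization over the first `p+1` vector arguments vanishes. -/
def FirstBianchiForm (p : ℕ) (hp : 0 < p) (ω : (Fin p → V) → (Fin p → V) → ℝ) : Prop :=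
  ∀ (z : Fin (p + 1) → V) (y : Fin p → V),
    ∑ σ : Equiv.Perm (Fin (p + 1)),
      ((Equiv.Perm.sign σ : ℤ) : ℝ) *
        ω (fun i => z (σ (Fin.castSucc i))) (Function.update y ⟨0, hp⟩ (z (σ (Fin.last p)))) = 0

/-- The scalar curvature `Scal = c²R` of a `(2,2)`-double form (in components). -/
def scalDF {n : ℕ} (Rd : DF n) : ℝ := DF.toScalar (DF.contrN 2 Rd)

/-- The `2k`-th Gauss–Bonnet curvature `h_{2k} = c^{2k} R^k / (2k)!`. -/
def h2kDF {n : ℕ} (k : ℕ) (Rd : DF n) : ℝ :=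
  DF.toScalar (DF.contrN (2 * k) (DF.pow Rd k)) / ((2 * k).factorial : ℝ)

/-- The second Gauss–Bonnet curvature `h₄ = c⁴ R² / 4!`. -/
def h4DF {n : ℕ} (Rd : DF n) : ℝ :=
  DF.toScalar (DF.contrN 4 (DF.pow Rd 2)) / (Nat.factorial 4 : ℝ)

end Geometry

end

/-! ### Auxiliary lemmas -/

namespace StmtZeroAux

open DF

variable {n k : ℕ}

lemma shuffleSign_mul_self (A B : Finset (Fin n)) :
    DF.shuffleSign A B * DF.shuffleSign A B = 1 := by
  rw [DF.shuffleSign, ← pow_add, ← two_mul, pow_mul]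
  norm_num

/-- Summation over a finset via its increasing enumeration. -/
lemma sum_emb {β : Type*} [AddCommMonoid β] {s : Finset (Fin n)} (h : s.card = k)
    (f : Fin n → β) : ∑ x ∈ s, f x = ∑ i : Fin k, f (s.orderEmbOfFin h i) := by
  refine (Finset.sum_bij (fun (i : Fin k) _ => s.orderEmbOfFin h i) ?_ ?_ ?_ ?_).symm
  · intro i _; exact Finset.orderEmbOfFin_mem s h i
  · intro i _ j _ hij; exact (s.orderEmbOfFin h).injective hij
  · intro b hb
    have : b ∈ Set.range (s.orderEmbOfFin h) := by
      rw [Finset.range_orderEmbOfFin]; exact hb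
    obtain ⟨i, hi⟩ := this
    exact ⟨i, Finset.mem_univ i, hi⟩
  · intro i _; rfl

lemma prod_emb {s : Finset (Fin n)} (h : s.card = k)
    (f : Fin n → ℝ) : ∏ x ∈ s, f x = ∏ i : Fin k, f (s.orderEmbOfFin h i) := by
  refine (Finset.prod_bij (fun (i : Fin k) _ => s.orderEmbOfFin h i) ?_ ?_ ?_ ?_).symm
  · intro i _; exact Finset.orderEmbOfFin_mem s h i
  · intro i _ j _ hij; exact (s.orderEmbOfFin h).injective hij
  · intro b hb
    have : b ∈ Set.range (s.orderEmbOfFin h) := by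
      rw [Finset.range_orderEmbOfFin]; exact hb
    obtain ⟨i, hi⟩ := this
    exact ⟨i, Finset.mem_univ i, hi⟩
  · intro i _; rfl

/-- The key combinatorial property of iterated contraction on the diagonal. -/
lemma contrN_diag (r : ℕ) (ω : DF n) (A : Finset (Fin n)) :
    DF.contrN r ω A A =
      (r.factorial : ℝ) * ∑ S ∈ Finset.powersetCard r Aᶜ, ω (A ∪ S) (A ∪ S) := by
  induction r generalizing ω with
  | zero =>
    simp [DF.contrN, Finset.powersetCard_zero]
  | succ r ih =>
    rw [DF.contrN, Function.iterate_succ_apply, ← DF.contrN, ih]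
    have hterm : ∀ S ∈ Finset.powersetCard r Aᶜ,
        DF.contr ω (A ∪ S) (A ∪ S) =
          ∑ i ∈ (A ∪ S)ᶜ, ω (insert i (A ∪ S)) (insert i (A ∪ S)) := by
      intro S _
      rw [DF.contr]
      have : ∀ i : Fin n,
          (if i ∈ A ∪ S ∨ i ∈ A ∪ S then (0:ℝ)
           else DF.shuffleSign {i} (A ∪ S) * DF.shuffleSign {i} (A ∪ S) *
             ω (insert i (A ∪ S)) (insert i (A ∪ S)))
          = if i ∈ (A ∪ S)ᶜ then ω (insert i (A ∪ S)) (insert i (A ∪ S)) else 0 := by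
        intro i
        by_cases hi : i ∈ A ∪ S
        · rw [if_pos (Or.inl hi), if_neg (by simp only [Finset.mem_compl]; exact not_not_intro hi)]
        · rw [if_neg (by simp [hi]), if_pos (Finset.mem_compl.mpr hi),
            shuffleSign_mul_self, one_mul]
      rw [Finset.sum_congr rfl fun i _ => this i, Finset.sum_ite_mem,
        Finset.univ_inter]
    rw [Finset.sum_congr rfl hterm]
    have key : ∑ S ∈ Finset.powersetCard r Aᶜ, ∑ i ∈ (A ∪ S)ᶜ,
          ω (insert i (A ∪ S)) (insert i (A ∪ S))
        = ∑ S ∈ Finset.powersetCard (r+1) Aᶜ, ∑ _i ∈ S, ω (A ∪ S) (A ∪ S) := by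
      rw [Finset.sum_sigma', Finset.sum_sigma']
      refine Finset.sum_nbij' (fun p => ⟨insert p.2 p.1, p.2⟩)
        (fun p => ⟨p.1.erase p.2, p.2⟩) ?_ ?_ ?_ ?_ ?_
      · rintro ⟨S, i⟩ hp
        rw [Finset.mem_sigma] at hp ⊢
        obtain ⟨hS, hi⟩ := hp
        rw [Finset.mem_powersetCard] at hS
        rw [Finset.mem_compl, Finset.mem_union] at hi
        push_neg at hi
        constructor
        · rw [Finset.mem_powersetCard]
          constructor
          · intro x hx
            rw [Finset.mem_insert] at hx
            rcases hx with rfl | hx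
            · rw [Finset.mem_compl]; exact hi.1
            · exact hS.1 hx
          · rw [Finset.card_insert_of_notMem hi.2, hS.2]
        · exact Finset.mem_insert_self _ _
      · rintro ⟨S, i⟩ hp
        rw [Finset.mem_sigma] at hp ⊢
        obtain ⟨hS, hi⟩ := hp
        rw [Finset.mem_powersetCard] at hS
        constructor
        · rw [Finset.mem_powersetCard]
          refine ⟨(Finset.erase_subset _ _).trans hS.1, ?_⟩
          simp [Finset.card_erase_of_mem hi, hS.2]
        · rw [Finset.mem_compl, Finset.mem_union]
          push_neg
          refine ⟨fun hiA => ?_, Finset.notMem_erase _ _⟩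
          have := hS.1 hi
          rw [Finset.mem_compl] at this
          exact this hiA
      · rintro ⟨S, i⟩ hp
        rw [Finset.mem_sigma] at hp
        obtain ⟨_, hi⟩ := hp
        rw [Finset.mem_compl, Finset.mem_union] at hi
        push_neg at hi
        simp [Finset.erase_insert hi.2]
      · rintro ⟨S, i⟩ hp
        rw [Finset.mem_sigma] at hp
        simp [Finset.insert_erase hp.2]
      · rintro ⟨S, i⟩ hp
        rw [Finset.mem_sigma] at hp
        obtain ⟨_, hi⟩ := hp
        rw [Finset.mem_compl, Finset.mem_union] at hi
        push_neg at hi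
        simp [Finset.union_insert]
    rw [key]
    have : ∀ S ∈ Finset.powersetCard (r+1) Aᶜ,
        (∑ _i ∈ S, ω (A ∪ S) (A ∪ S)) = ((r:ℝ)+1) * ω (A ∪ S) (A ∪ S) := by
      intro S hS
      rw [Finset.sum_const, (Finset.mem_powersetCard.mp hS).2]
      push_cast
      rw [nsmul_eq_mul]
      push_cast
      ring
    rw [Finset.sum_congr rfl this, Finset.mul_sum, Finset.mul_sum]
    refine Finset.sum_congr rfl fun S _ => ?_
    rw [Nat.factorial_succ]
    push_cast
    ring


/-- Enumeration of `S.erase a` in terms of that of `S`, via `succAbove`. -/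
lemma orderEmbOfFin_erase {S : Finset (Fin n)} (hS : S.card = k + 1) (i : Fin (k + 1))
    (h' : (S.erase (S.orderEmbOfFin hS i)).card = k) (m : Fin k) :
    (S.erase (S.orderEmbOfFin hS i)).orderEmbOfFin h' m
      = S.orderEmbOfFin hS (i.succAbove m) := by
  have hmem : ∀ x : Fin k,
      S.orderEmbOfFin hS (i.succAbove x) ∈ S.erase (S.orderEmbOfFin hS i) := by
    intro x
    rw [Finset.mem_erase]
    exact ⟨fun hc => (Fin.succAbove_ne i x) ((S.orderEmbOfFin hS).injective hc),
      Finset.orderEmbOfFin_mem _ _ _⟩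
  have hmono : StrictMono fun x : Fin k => S.orderEmbOfFin hS (i.succAbove x) :=
    (S.orderEmbOfFin hS).strictMono.comp (Fin.strictMono_succAbove i)
  have := Finset.orderEmbOfFin_unique h' hmem hmono
  exact (congrFun this m).symm

/-- The shuffle sign of moving an element past the rest of its finset. -/
lemma shuffleSign_erase {S : Finset (Fin n)} (hS : S.card = k + 1) (i : Fin (k + 1)) :
    DF.shuffleSign (S.erase (S.orderEmbOfFin hS i)) {S.orderEmbOfFin hS i}
      = (-1 : ℝ) ^ (k - (i : ℕ)) := by
  set a := S.orderEmbOfFin hS i with ha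
  rw [DF.shuffleSign]
  congr 1
  have hterm : ∀ x : Fin n, (({a} : Finset (Fin n)).filter fun b => b < x).card
      = if a < x then 1 else 0 := by
    intro x
    rw [Finset.filter_singleton]
    split <;> simp
  rw [Finset.sum_congr rfl fun x _ => hterm x, ← Finset.card_filter]
  have hfe : (S.erase a).filter (fun x => a < x) = S.filter (fun x => a < x) := by
    ext x
    simp only [Finset.mem_filter, Finset.mem_erase]
    constructor
    · rintro ⟨⟨_, hx⟩, hax⟩; exact ⟨hx, hax⟩
    · rintro ⟨hx, hax⟩; exact ⟨⟨fun hc => by subst hc; exact lt_irrefl _ hax, hx⟩, hax⟩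
  rw [hfe]
  have himg : S.filter (fun x => a < x)
      = (Finset.Ioi i).image (S.orderEmbOfFin hS) := by
    ext x
    simp only [Finset.mem_filter, Finset.mem_image, Finset.mem_Ioi]
    constructor
    · rintro ⟨hx, hax⟩
      have : x ∈ Set.range (S.orderEmbOfFin hS) := by
        rw [Finset.range_orderEmbOfFin]; exact hx
      obtain ⟨m, rfl⟩ := this
      exact ⟨m, (S.orderEmbOfFin hS).strictMono.lt_iff_lt.mp hax, rfl⟩
    · rintro ⟨m, him, rfl⟩
      exact ⟨Finset.orderEmbOfFin_mem _ _ _, (S.orderEmbOfFin hS).strictMono him⟩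
  rw [himg, Finset.card_image_of_injective _ (S.orderEmbOfFin hS).injective,
    Fin.card_Ioi]
  omega

/-- `mul` adds degrees. -/
lemma isDeg_mul {p q : ℕ} {ω θ : DF n} (hω : DF.IsDeg p ω) (hθ : DF.IsDeg q θ) :
    DF.IsDeg (p + q) (DF.mul ω θ) := by
  intro S T hne
  by_contra hcard
  apply hne
  rw [DF.mul]
  refine Finset.sum_eq_zero fun A hA => Finset.sum_eq_zero fun C hC => ?_
  rw [Finset.mem_powerset] at hA hC
  by_cases h1 : ω A C = 0
  · rw [h1]; ring
  by_cases h2 : θ (S \ A) (T \ C) = 0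
  · rw [h2]; ring
  obtain ⟨hA1, hC1⟩ := hω A C h1
  obtain ⟨hA2, hC2⟩ := hθ _ _ h2
  exfalso
  apply hcard
  have eS : S.card = p + q := by
    have := Finset.card_sdiff_add_card_eq_card hA
    omega
  have eT : T.card = p + q := by
    have := Finset.card_sdiff_add_card_eq_card hC
    omega
  exact ⟨eS, eT⟩

lemma isDeg_pow {ω : DF n} (hω : DF.IsDeg 1 ω) (k : ℕ) :
    DF.IsDeg k (DF.pow ω k) := by
  induction k with
  | zero =>
    intro S T hne
    rw [DF.pow, DF.one] at hne
    by_cases h : S = ∅ ∧ T = ∅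
    · simp [h.1, h.2]
    · rw [if_neg h] at hne; exact absurd rfl hne
  | succ k ih =>
    rw [DF.pow]
    exact isDeg_mul ih hω

lemma neg_one_pow_sub {i : ℕ} (h : i ≤ k) :
    ((-1 : ℝ)) ^ (k - i) = (-1) ^ k * (-1) ^ i :=
  calc (-1 : ℝ) ^ (k - i) = (-1) ^ (k - i) * ((-1) ^ i * (-1) ^ i) := by
        rw [← pow_add, ← two_mul, pow_mul]; norm_num
    _ = (-1) ^ ((k - i) + i) * (-1) ^ i := by rw [← mul_assoc, pow_add]
    _ = (-1) ^ k * (-1) ^ i := by rw [Nat.sub_add_cancel h]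


lemma sdiff_erase_self {S : Finset (Fin n)} {a : Fin n} (ha : a ∈ S) :
    S \ S.erase a = {a} := by
  rw [Finset.sdiff_erase ha, Finset.sdiff_self]
  rfl

lemma sum_powersetCard_pred {S : Finset (Fin n)} (hS : S.card = k + 1)
    (F : Finset (Fin n) → ℝ) :
    ∑ A ∈ Finset.powersetCard k S, F A = ∑ a ∈ S, F (S.erase a) := by
  refine (Finset.sum_bij (fun a _ => S.erase a) ?_ ?_ ?_ ?_).symm
  · intro a ha
    rw [Finset.mem_powersetCard]
    exact ⟨Finset.erase_subset _ _, by simp [Finset.card_erase_of_mem ha, hS]⟩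
  · intro a₁ ha₁ a₂ ha₂ h
    by_contra hne
    have h' : S.erase a₁ = S.erase a₂ := h
    have h1 : a₁ ∈ S.erase a₂ := Finset.mem_erase.mpr ⟨hne, ha₁⟩
    rw [← h'] at h1
    exact (Finset.mem_erase.mp h1).1 rfl
  · intro A hA
    rw [Finset.mem_powersetCard] at hA
    have hcd : (S \ A).card = 1 := by
      rw [Finset.card_sdiff_of_subset hA.1, hS, hA.2]
      omega
    obtain ⟨a, haeq⟩ := Finset.card_eq_one.mp hcd
    have haS : a ∈ S := by
      have : a ∈ S \ A := by rw [haeq]; exact Finset.mem_singleton_self a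
      exact (Finset.mem_sdiff.mp this).1
    refine ⟨a, haS, ?_⟩
    show S.erase a = A
    rw [Finset.erase_eq, ← haeq, Finset.sdiff_sdiff_eq_self hA.1]
  · intro a _; rfl

lemma pow_apply {ω : DF n} (hω : DF.IsDeg 1 ω) (k : ℕ) (S T : Finset (Fin n))
    (hS : S.card = k) (hT : T.card = k) :
    DF.pow ω k S T = (k.factorial : ℝ) *
      (Matrix.of fun i j : Fin k =>
        ω {S.orderEmbOfFin hS i} {T.orderEmbOfFin hT j}).det := by
  induction k generalizing S T with
  | zero =>
    obtain rfl := Finset.card_eq_zero.mp hS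
    obtain rfl := Finset.card_eq_zero.mp hT
    simp [DF.pow, DF.one, Matrix.det_fin_zero]
  | succ k ih =>
    rw [DF.pow, DF.mul]
    have hpowdeg := isDeg_pow hω k
    -- restrict the outer sum to subsets of cardinality k
    have hsubA : Finset.powersetCard k S ⊆ S.powerset := fun A hA =>
      Finset.mem_powerset.mpr (Finset.mem_powersetCard.mp hA).1
    rw [← Finset.sum_subset hsubA (fun A hA hA' => Finset.sum_eq_zero fun C _ => by
      by_cases h0 : DF.pow ω k A C = 0
      · rw [h0]; ring
      · exact absurd (Finset.mem_powersetCard.mpr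
          ⟨Finset.mem_powerset.mp hA, (hpowdeg A C h0).1⟩) hA')]
    -- restrict the inner sums to subsets of cardinality k
    have hsubC : Finset.powersetCard k T ⊆ T.powerset := fun C hC =>
      Finset.mem_powerset.mpr (Finset.mem_powersetCard.mp hC).1
    rw [Finset.sum_congr rfl (fun A _ =>
      (Finset.sum_subset hsubC (fun C hC hC' => by
        by_cases h0 : DF.pow ω k A C = 0
        · rw [h0]; ring
        · exact absurd (Finset.mem_powersetCard.mpr
            ⟨Finset.mem_powerset.mp hC, (hpowdeg A C h0).2⟩) hC')).symm)]
    -- replace subsets by erased elements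
    rw [sum_powersetCard_pred hS]
    rw [Finset.sum_congr rfl (fun a _ => sum_powersetCard_pred hT _)]
    -- rewrite the terms
    have hTerm : ∀ a ∈ S, ∀ c ∈ T,
        DF.shuffleSign (S.erase a) (S \ S.erase a) *
            DF.shuffleSign (T.erase c) (T \ T.erase c) *
            DF.pow ω k (S.erase a) (T.erase c) * ω (S \ S.erase a) (T \ T.erase c)
        = DF.shuffleSign (S.erase a) {a} * DF.shuffleSign (T.erase c) {c} *
            DF.pow ω k (S.erase a) (T.erase c) * ω {a} {c} := by
      intro a ha c hc
      rw [sdiff_erase_self ha, sdiff_erase_self hc]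
    rw [Finset.sum_congr rfl (fun a ha => Finset.sum_congr rfl (fun c hc =>
      hTerm a ha c hc))]
    -- enumerate S and T
    rw [sum_emb hS, Finset.sum_congr rfl (fun i _ => sum_emb hT _)]
    set N : Matrix (Fin (k+1)) (Fin (k+1)) ℝ :=
      Matrix.of fun i j => ω {S.orderEmbOfFin hS i} {T.orderEmbOfFin hT j} with hN
    have hcardS : ∀ i : Fin (k+1), (S.erase (S.orderEmbOfFin hS i)).card = k := by
      intro i
      simp [Finset.card_erase_of_mem (Finset.orderEmbOfFin_mem _ _ _), hS]
    have hcardT : ∀ j : Fin (k+1), (T.erase (T.orderEmbOfFin hT j)).card = k := by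
      intro j
      simp [Finset.card_erase_of_mem (Finset.orderEmbOfFin_mem _ _ _), hT]
    have hterm2 : ∀ i j : Fin (k+1),
        DF.shuffleSign (S.erase (S.orderEmbOfFin hS i)) {S.orderEmbOfFin hS i} *
          DF.shuffleSign (T.erase (T.orderEmbOfFin hT j)) {T.orderEmbOfFin hT j} *
          DF.pow ω k (S.erase (S.orderEmbOfFin hS i)) (T.erase (T.orderEmbOfFin hT j)) *
          ω {S.orderEmbOfFin hS i} {T.orderEmbOfFin hT j}
        = (k.factorial : ℝ) * ((-1 : ℝ) ^ ((i : ℕ) + (j : ℕ)) * N i j *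
            (N.submatrix i.succAbove j.succAbove).det) := by
      intro i j
      rw [shuffleSign_erase hS i, shuffleSign_erase hT j,
        ih _ _ (hcardS i) (hcardT j)]
      have hsub : (Matrix.of fun a b : Fin k =>
          ω {(S.erase (S.orderEmbOfFin hS i)).orderEmbOfFin (hcardS i) a}
            {(T.erase (T.orderEmbOfFin hT j)).orderEmbOfFin (hcardT j) b})
          = N.submatrix i.succAbove j.succAbove := by
        ext a b
        simp only [Matrix.submatrix_apply, Matrix.of_apply]
        rw [orderEmbOfFin_erase hS i (hcardS i) a, orderEmbOfFin_erase hT j (hcardT j) b]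
        rfl
      rw [hsub]
      have hi : (i : ℕ) ≤ k := Nat.lt_succ_iff.mp i.isLt
      have hj : (j : ℕ) ≤ k := Nat.lt_succ_iff.mp j.isLt
      rw [neg_one_pow_sub hi, neg_one_pow_sub hj]
      have hNij : ω {S.orderEmbOfFin hS i} {T.orderEmbOfFin hT j} = N i j := rfl
      rw [hNij, pow_add]
      ring_nf
      have h21 : ((-1 : ℝ)) ^ (k * 2) = 1 := by rw [pow_mul']; norm_num
      rw [h21]
      ring
    rw [Finset.sum_congr rfl (fun i _ => Finset.sum_congr rfl (fun j _ => hterm2 i j))]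
    have hrow : ∀ i : Fin (k+1),
        ∑ j : Fin (k+1), (k.factorial : ℝ) * ((-1 : ℝ) ^ ((i : ℕ) + (j : ℕ)) * N i j *
          (N.submatrix i.succAbove j.succAbove).det)
        = (k.factorial : ℝ) * N.det := by
      intro i
      rw [← Finset.mul_sum, ← Matrix.det_succ_row N i]
    rw [Finset.sum_congr rfl (fun i _ => hrow i), Finset.sum_const, Finset.card_univ,
      Fintype.card_fin, Nat.factorial_succ]
    push_cast
    rw [nsmul_eq_mul]
    push_cast
    ring

/-- Minor determinant of a square matrix, total version. -/
def ddet (k : ℕ) (M : Matrix (Fin n) (Fin n) ℝ) (S T : Finset (Fin n)) : ℝ :=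
  if h : S.card = k ∧ T.card = k then
    (M.submatrix (S.orderEmbOfFin h.1) (T.orderEmbOfFin h.2)).det
  else 0

lemma ddet_eq {M : Matrix (Fin n) (Fin n) ℝ} {S T : Finset (Fin n)}
    (hS : S.card = k) (hT : T.card = k) :
    ddet k M S T = (M.submatrix (S.orderEmbOfFin hS) (T.orderEmbOfFin hT)).det :=
  dif_pos ⟨hS, hT⟩

/-- The scalar `c^k ω^k` as a sum of principal minors. -/
lemma toScalar_contrN_pow {ω : DF n} (hω : DF.IsDeg 1 ω) (k : ℕ) :
    DF.toScalar (DF.contrN k (DF.pow ω k)) =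
      ((k.factorial : ℝ))^2 * ∑ S ∈ Finset.powersetCard k (Finset.univ : Finset (Fin n)),
        ddet k (Matrix.of fun i j => ω {i} {j}) S S := by
  rw [DF.toScalar, contrN_diag]
  have hcompl : (∅ : Finset (Fin n))ᶜ = Finset.univ := by simp
  rw [hcompl]
  have hterm : ∀ S ∈ Finset.powersetCard k (Finset.univ : Finset (Fin n)),
      DF.pow ω k (∅ ∪ S) (∅ ∪ S)
        = (k.factorial : ℝ) * ddet k (Matrix.of fun i j => ω {i} {j}) S S := by
    intro S hS
    have hc : S.card = k := (Finset.mem_powersetCard.mp hS).2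
    rw [Finset.empty_union, pow_apply hω k S S hc hc, ddet_eq hc hc]
    rfl
  rw [Finset.sum_congr rfl hterm, ← Finset.mul_sum]
  ring

lemma image_orderEmbOfFin {s : Finset (Fin n)} (h : s.card = k) :
    Finset.image (s.orderEmbOfFin h) Finset.univ = s := by
  ext x
  simp only [Finset.mem_image, Finset.mem_univ, true_and]
  constructor
  · rintro ⟨i, rfl⟩; exact Finset.orderEmbOfFin_mem _ _ _
  · intro hx
    have : x ∈ Set.range (s.orderEmbOfFin h) := by
      rw [Finset.range_orderEmbOfFin]; exact hx
    obtain ⟨i, hi⟩ := this; exact ⟨i, hi⟩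

/-- Column-minor of a wide matrix, total version. -/
def cdet (k : ℕ) (A : Matrix (Fin k) (Fin n) ℝ) (S : Finset (Fin n)) : ℝ :=
  if h : S.card = k then (A.submatrix id (S.orderEmbOfFin h)).det else 0

/-- Row-minor of a tall matrix, total version. -/
def rdet (k : ℕ) (B : Matrix (Fin n) (Fin k) ℝ) (S : Finset (Fin n)) : ℝ :=
  if h : S.card = k then (B.submatrix (S.orderEmbOfFin h) id).det else 0

/-- **Cauchy–Binet formula**. -/
theorem cauchy_binet (A : Matrix (Fin k) (Fin n) ℝ) (B : Matrix (Fin n) (Fin k) ℝ) :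
    (A * B).det = ∑ S ∈ Finset.powersetCard k (Finset.univ : Finset (Fin n)),
      cdet k A S * rdet k B S := by
  classical
  -- Step 1: expand the determinant along the rows
  have step1 : (A * B).det
      = ∑ f : Fin k → Fin n, (∏ i, A i (f i)) * (B.submatrix f id).det := by
    have hAB : (A * B) = fun i => ∑ l : Fin n, A i l • B l := by
      funext i j
      simp [Matrix.mul_apply, Finset.sum_apply]
    calc (A * B).det
        = Matrix.detRowAlternating (R := ℝ) (n := Fin k)
            (fun i => ∑ l : Fin n, A i l • B l) := by rw [← hAB]; rfl
      _ = ∑ f : Fin k → Fin n, Matrix.detRowAlternating (R := ℝ) (n := Fin k)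
            (fun i => A i (f i) • B (f i)) := by
          exact (Matrix.detRowAlternating (R := ℝ) (n := Fin k)).toMultilinearMap.map_sum
            (fun i l => A i l • B l)
      _ = ∑ f : Fin k → Fin n, (∏ i, A i (f i)) * (B.submatrix f id).det := by
          refine Finset.sum_congr rfl fun f _ => ?_
          have h2 := (Matrix.detRowAlternating (R := ℝ) (n := Fin k)).toMultilinearMap.map_smul_univ
            (fun i => A i (f i)) (fun i => B (f i))
          calc (Matrix.detRowAlternating (R := ℝ) (n := Fin k))
                (fun i => A i (f i) • B (f i))
              = (∏ i, A i (f i)) • (Matrix.detRowAlternating (R := ℝ) (n := Fin k))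
                (fun i => B (f i)) := h2
            _ = (∏ i, A i (f i)) * (B.submatrix f id).det := by
                rw [smul_eq_mul]
                rfl
  rw [step1]
  -- Step 2: only injective maps contribute.
  rw [← Finset.sum_filter_of_ne (p := fun f : Fin k → Fin n => Function.Injective f)
    (fun f _ hne => by
      by_contra hinj
      obtain ⟨i, j, hij, hne'⟩ := Function.not_injective_iff.mp hinj
      have : (B.submatrix f id).det = 0 :=
        Matrix.det_zero_of_row_eq hne' (by
          funext c; simp [Matrix.submatrix_apply, hij])
      rw [this, mul_zero] at hne
      exact hne rfl)]
  -- Step 3: reparametrize injective maps by (subset, permutation) pairs.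
  have step3 : ∑ p ∈ (Finset.powersetCard k (Finset.univ : Finset (Fin n))).sigma
        (fun _ => (Finset.univ : Finset (Equiv.Perm (Fin k)))),
        (if h : p.1.card = k then
          ((Equiv.Perm.sign p.2 : ℤ) : ℝ) * (∏ m, A m (p.1.orderEmbOfFin h (p.2 m)))
            * (B.submatrix (p.1.orderEmbOfFin h) id).det
         else 0)
      = ∑ f ∈ Finset.filter (fun f : Fin k → Fin n => Function.Injective f) Finset.univ,
        (∏ i, A i (f i)) * (B.submatrix f id).det := by
    refine Finset.sum_bij
      (fun p hp => fun m =>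
        p.1.orderEmbOfFin (Finset.mem_powersetCard.mp (Finset.mem_sigma.mp hp).1).2 (p.2 m))
      ?_ ?_ ?_ ?_
    · intro p hp
      rw [Finset.mem_filter]
      exact ⟨Finset.mem_univ _,
        (p.1.orderEmbOfFin _).injective.comp p.2.injective⟩
    · rintro ⟨S₁, σ₁⟩ hp₁ ⟨S₂, σ₂⟩ hp₂ heq
      have hc₁ := (Finset.mem_powersetCard.mp (Finset.mem_sigma.mp hp₁).1).2
      have hc₂ := (Finset.mem_powersetCard.mp (Finset.mem_sigma.mp hp₂).1).2
      have hSeq : S₁ = S₂ := by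
        have himg : ∀ (S : Finset (Fin n)) (hc : S.card = k) (σ : Equiv.Perm (Fin k)),
            Finset.image (fun m => S.orderEmbOfFin hc (σ m)) Finset.univ = S := by
          intro S hc σ
          rw [show (fun m => S.orderEmbOfFin hc (σ m))
              = (S.orderEmbOfFin hc) ∘ σ from rfl, ← Finset.image_image,
            Finset.image_univ_equiv, image_orderEmbOfFin]
        rw [← himg S₁ hc₁ σ₁, ← himg S₂ hc₂ σ₂]
        exact congrArg (fun f => Finset.image f Finset.univ) heq
      subst hSeq
      have hσeq : σ₁ = σ₂ := by
        refine Equiv.ext fun m => ?_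
        have := congrFun heq m
        exact (S₁.orderEmbOfFin hc₁).injective this
      rw [hσeq]
    · intro f hf
      have hfinj : Function.Injective f := (Finset.mem_filter.mp hf).2
      set S := Finset.image f Finset.univ with hSdef
      have hcS : S.card = k := by
        rw [hSdef, Finset.card_image_of_injective _ hfinj, Finset.card_univ,
          Fintype.card_fin]
      have hmem : ∀ m, f m ∈ S := fun m => Finset.mem_image_of_mem f (Finset.mem_univ m)
      have einj : Function.Injective
          (fun m => (S.orderIsoOfFin hcS).symm ⟨f m, hmem m⟩) := by
        intro m₁ m₂ hm
        have := congrArg (S.orderIsoOfFin hcS) hm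
        simp only [OrderIso.apply_symm_apply, Subtype.mk.injEq] at this
        exact hfinj this
      refine ⟨⟨S, Equiv.ofBijective _ (Finite.injective_iff_bijective.mp einj)⟩,
        Finset.mem_sigma.mpr ⟨Finset.mem_powersetCard.mpr ⟨Finset.subset_univ _, hcS⟩,
          Finset.mem_univ _⟩, ?_⟩
      funext m
      show S.orderEmbOfFin _ ((S.orderIsoOfFin hcS).symm ⟨f m, hmem m⟩) = f m
      rw [← Finset.coe_orderIsoOfFin_apply, OrderIso.apply_symm_apply]
    · rintro ⟨S, σ⟩ hp
      have hc := (Finset.mem_powersetCard.mp (Finset.mem_sigma.mp hp).1).2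
      rw [dif_pos hc]
      have hdet : (B.submatrix (fun m => S.orderEmbOfFin hc (σ m)) id).det
          = ((Equiv.Perm.sign σ : ℤ) : ℝ) * (B.submatrix (S.orderEmbOfFin hc) id).det := by
        have : B.submatrix (fun m => S.orderEmbOfFin hc (σ m)) id
            = (B.submatrix (S.orderEmbOfFin hc) id).submatrix σ id := by
          rw [Matrix.submatrix_submatrix]
          rfl
        rw [this, Matrix.det_permute]
      show ((Equiv.Perm.sign σ : ℤ) : ℝ) * (∏ m, A m (S.orderEmbOfFin hc (σ m)))
          * (B.submatrix (S.orderEmbOfFin hc) id).det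
        = (∏ i, A i ((fun m => S.orderEmbOfFin hc (σ m)) i))
          * (B.submatrix (fun m => S.orderEmbOfFin hc (σ m)) id).det
      rw [hdet]
      ring
  rw [← step3, Finset.sum_sigma]
  refine Finset.sum_congr rfl fun S hS => ?_
  have hc := (Finset.mem_powersetCard.mp hS).2
  rw [cdet, rdet, dif_pos hc, dif_pos hc]
  have hdetA : (A.submatrix id (S.orderEmbOfFin hc)).det
      = ∑ σ : Equiv.Perm (Fin k),
        ((Equiv.Perm.sign σ : ℤ) : ℝ) * ∏ m, A m (S.orderEmbOfFin hc (σ m)) := by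
    rw [← Matrix.det_transpose, Matrix.det_apply']
    refine Finset.sum_congr rfl fun σ _ => ?_
    congr 1
  rw [hdetA, Finset.sum_mul]
  refine Finset.sum_congr rfl fun σ _ => ?_
  rw [dif_pos hc]

/-- Sum of principal minors of order `k`. -/
def pmsum (k : ℕ) (M : Matrix (Fin n) (Fin n) ℝ) : ℝ :=
  ∑ S ∈ Finset.powersetCard k (Finset.univ : Finset (Fin n)), ddet k M S S

lemma pmsum_mul_expand (A B : Matrix (Fin n) (Fin n) ℝ) :
    pmsum k (A * B) = ∑ S ∈ Finset.powersetCard k (Finset.univ : Finset (Fin n)),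
      ∑ T ∈ Finset.powersetCard k (Finset.univ : Finset (Fin n)),
        ddet k A S T * ddet k B T S := by
  unfold pmsum
  refine Finset.sum_congr rfl fun S hS => ?_
  have hc := (Finset.mem_powersetCard.mp hS).2
  rw [ddet_eq hc hc]
  have hmul : (A * B).submatrix (S.orderEmbOfFin hc) (S.orderEmbOfFin hc)
      = (A.submatrix (S.orderEmbOfFin hc) id) * (B.submatrix id (S.orderEmbOfFin hc)) :=
    Matrix.submatrix_mul _ _ _ id _ Function.bijective_id
  rw [hmul, cauchy_binet]
  refine Finset.sum_congr rfl fun T hT => ?_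
  have hcT := (Finset.mem_powersetCard.mp hT).2
  rw [cdet, rdet, dif_pos hcT, dif_pos hcT, ddet_eq hc hcT, ddet_eq hcT hc,
    Matrix.submatrix_submatrix, Matrix.submatrix_submatrix]
  rfl

lemma pmsum_mul_comm (A B : Matrix (Fin n) (Fin n) ℝ) :
    pmsum k (A * B) = pmsum k (B * A) := by
  rw [pmsum_mul_expand, pmsum_mul_expand, Finset.sum_comm]
  exact Finset.sum_congr rfl fun S _ => Finset.sum_congr rfl fun T _ => mul_comm _ _

lemma pmsum_diagonal (d : Fin n → ℝ) :
    pmsum k (Matrix.diagonal d)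
      = ∑ S ∈ Finset.powersetCard k (Finset.univ : Finset (Fin n)), ∏ i ∈ S, d i := by
  unfold pmsum
  refine Finset.sum_congr rfl fun S hS => ?_
  have hc := (Finset.mem_powersetCard.mp hS).2
  rw [ddet_eq hc hc,
    Matrix.submatrix_diagonal _ _ (S.orderEmbOfFin hc).injective,
    Matrix.det_diagonal, prod_emb hc]
  rfl

lemma pmsum_hermitian (M : Matrix (Fin n) (Fin n) ℝ) (hM : M.IsHermitian) (k : ℕ) :
    pmsum k M = ∑ S ∈ Finset.powersetCard k (Finset.univ : Finset (Fin n)),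
      ∏ i ∈ S, hM.eigenvalues i := by
  set U : Matrix (Fin n) (Fin n) ℝ := (hM.eigenvectorUnitary : Matrix (Fin n) (Fin n) ℝ)
    with hU
  have hM' : M = U * (Matrix.diagonal hM.eigenvalues * star U) := by
    conv_lhs => rw [hM.spectral_theorem, Unitary.conjStarAlgAut_apply]
    rw [mul_assoc]
    rfl
  conv_lhs => rw [hM']
  rw [pmsum_mul_comm, mul_assoc,
    Matrix.UnitaryGroup.star_mul_self hM.eigenvectorUnitary, mul_one, pmsum_diagonal]

end StmtZeroAux

/-- For every symmetric bilinear form `h` on an `n`-dimensional real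
inner product space `(V,g)` and every `0 ≤ k ≤ n`, the `k`-th elementary symmetric
function of the eigenvalues of `h` satisfies `σ_k(h) = (1/(k!)²) · c^k h^k`. -/
theorem stmt0_sigma_eq_contraction_of_power
    (n k : ℕ) (hk : k ≤ n)
    (V : Type*) [NormedAddCommGroup V] [InnerProductSpace ℝ V]
    (hV : Module.finrank ℝ V = n)
    (e : OrthonormalBasis (Fin n) ℝ V)
    (h : V → V → ℝ) (hbil : IsBilin h) (hsymm : IsSymmBilin h) :
    DF.sigma k (ofBilin e h) =
      (1 / ((k.factorial : ℝ)) ^ 2) *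
        DF.toScalar (DF.contrN k (DF.pow (ofBilin e h) k)) := by
  classical
  open StmtZeroAux in
  set ω : DF n := ofBilin e h with hωdef
  have hdeg : DF.IsDeg 1 ω := by
    intro S T hne
    rw [hωdef, ofBilin, ofForm] at hne
    by_cases hc : S.card = 1 ∧ T.card = 1
    · exact hc
    · rw [dif_neg hc] at hne; exact absurd rfl hne
  have hsing : ∀ (S : Finset (Fin n)) (i : Fin n) (hc : S.card = 1)
      (hi : S = {i}) (m : Fin 1), ((S.orderIsoOfFin hc m : Fin n)) = i := by
    intro S i hc hi m
    subst hi
    exact Finset.mem_singleton.mp (({i} : Finset (Fin n)).orderIsoOfFin hc m).2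
  have hMval : ∀ i j : Fin n, ω {i} {j} = h (e i) (e j) := by
    intro i j
    rw [hωdef, ofBilin, ofForm,
      dif_pos ⟨Finset.card_singleton i, Finset.card_singleton j⟩]
    beta_reduce
    rw [hsing {i} i (Finset.card_singleton i) rfl 0,
      hsing {j} j (Finset.card_singleton j) rfl 0]
  have hHerm : (Matrix.of fun i j => ω {i} {j} :
      Matrix (Fin n) (Fin n) ℝ).IsHermitian := by
    rw [Matrix.IsHermitian]
    ext i j
    rw [Matrix.conjTranspose_apply]
    show star (ω {j} {i}) = ω {i} {j}
    rw [star_trivial, hMval, hMval, hsymm]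
  rw [DF.sigma, dif_pos hHerm, StmtZeroAux.toScalar_contrN_pow hdeg k,
    ← StmtZeroAux.pmsum, StmtZeroAux.pmsum_hermitian _ hHerm k]
  have hfac : ((k.factorial : ℝ)) ^ 2 ≠ 0 := by
    positivity
  field_simp
end

section
/- Avez's formula: let R be an algebraic curvature tensor on an n-dimensional real inner product space (V,g) with n ≥ 4. Then the second Gauss–Bonnet curvature satisfies h_4 = c⁴R²/4! = |R|² − |cR|² + (1/4)·(c²R)². -/
/-!
Double forms on an `n`-dimensional real inner product space `(V, g)`, represented
by their components with respect to a (fixed) orthonormal basis: a `(p,q)`-double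
form is determined by its values on pairs of increasingly ordered tuples of
distinct basis vectors, i.e. by a function `Finset (Fin n) → Finset (Fin n) → ℝ`
(supported on pairs of sets of cardinalities `p` and `q`).
-/

open Finset

/-! ### Auxiliary machinery for Avez's formula -/

namespace AvezAux

open Finset

noncomputable section

variable {n : ℕ}

/-- comparison sign -/
def sg (a b : Fin n) : ℝ := if a < b then 1 else -1

lemma sg_mul_self (a b : Fin n) : sg a b * sg a b = 1 := by
  unfold sg; split_ifs <;> norm_num

lemma sg_sq (a b : Fin n) : sg a b ^ 2 = 1 := by
  unfold sg; split_ifs <;> norm_num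

lemma sg_comm {a b : Fin n} (h : a ≠ b) : sg b a = - sg a b := by
  unfold sg
  rcases lt_or_gt_of_ne h with h' | h'
  · rw [if_neg (asymm h'), if_pos h']
  · rw [if_pos h', if_neg (asymm h')]; norm_num

lemma sg_pos {a b : Fin n} (h : a < b) : sg a b = 1 := if_pos h

lemma sh_mul_self (A B : Finset (Fin n)) :
    DF.shuffleSign A B * DF.shuffleSign A B = 1 := by
  unfold DF.shuffleSign
  rw [← pow_add]
  exact Even.neg_one_pow ⟨_, rfl⟩

lemma sh_empty (B : Finset (Fin n)) : DF.shuffleSign (∅ : Finset (Fin n)) B = 1 := by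
  simp [DF.shuffleSign]

lemma neg_one_pow_ite {a b : Fin n} (h : a ≠ b) :
    ((-1 : ℝ)) ^ (if b < a then 1 else 0) = sg a b := by
  unfold sg
  by_cases hba : b < a
  · rw [if_pos hba, if_neg (asymm hba)]; norm_num
  · rw [if_neg hba, if_pos (h.lt_or_gt.resolve_right hba)]; norm_num

lemma card_filter_pair (p : Fin n → Prop) [DecidablePred p] {k l : Fin n} (h : k ≠ l) :
    (({k, l} : Finset (Fin n)).filter p).card
      = (if p k then 1 else 0) + (if p l then 1 else 0) := by
  rw [show ({k, l} : Finset (Fin n)) = insert k {l} from rfl, Finset.filter_insert,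
    Finset.filter_singleton]
  by_cases hk : p k <;> by_cases hl : p l <;>
    simp [hk, hl, Finset.card_insert_of_notMem, h]

lemma sh_single {a b : Fin n} (h : a ≠ b) :
    DF.shuffleSign ({a} : Finset (Fin n)) {b} = sg a b := by
  unfold DF.shuffleSign
  rw [Finset.sum_singleton, Finset.filter_singleton]
  by_cases hba : b < a
  · rw [if_pos hba, Finset.card_singleton]
    rw [← neg_one_pow_ite h, if_pos hba]
  · rw [if_neg hba, Finset.card_empty, ← neg_one_pow_ite h, if_neg hba]

lemma sh_pair {i j k l : Fin n} (hij : i ≠ j) (hik : i ≠ k) (hil : i ≠ l)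
    (hjk : j ≠ k) (hjl : j ≠ l) (hkl : k ≠ l) :
    DF.shuffleSign ({i, j} : Finset (Fin n)) {k, l}
      = sg i k * sg i l * (sg j k * sg j l) := by
  unfold DF.shuffleSign
  rw [Finset.sum_pair hij, card_filter_pair _ hkl, card_filter_pair _ hkl, pow_add,
    pow_add, pow_add, neg_one_pow_ite hik, neg_one_pow_ite hil, neg_one_pow_ite hjk,
    neg_one_pow_ite hjl]

end

end AvezAux
namespace AvezAux
lemma powerset_single {α : Type*} [DecidableEq α] (a : α) :
    ({a} : Finset α).powerset = {∅, {a}} := by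
  ext t
  simp [Finset.subset_singleton_iff]
end AvezAux
namespace AvezAux

set_option linter.unusedVariables false
set_option linter.unusedSectionVars false

open Finset

noncomputable section

variable {n : ℕ}

section Core

variable (r : Fin n → Fin n → Fin n → Fin n → ℝ)

/-- canonical 12-term form of the Kulkarni square evaluated on a 4-tuple -/
def Phi (i j k l : Fin n) : ℝ :=
  2 * (r i j i j * r k l k l) + 2 * (r i k i k * r j l j l) + 2 * (r i l i l * r j k j k)
  + 2 * (r i j k l * r i j k l) + 2 * (r i k j l * r i k j l) + 2 * (r i l j k * r i l j k)
  - 4 * (r i j i k * r j l k l) + 4 * (r i j i l * r j k k l) + 4 * (r i j j k * r i l k l)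
  - 4 * (r i j j l * r i k k l) - 4 * (r i k i l * r j k j l) - 4 * (r i k j k * r i l j l)

/-- Ricci contraction -/
def Rc (a b : Fin n) : ℝ := ∑ m, r m a m b

def ScQ : ℝ := ∑ i, ∑ j, r i j i j

def AQ : ℝ := ∑ i, ∑ j, ∑ k, ∑ l, r i j k l * r i j k l

def PQ : ℝ := ∑ a, ∑ b, Rc r a b * Rc r a b

section Sym

variable (h1 : ∀ i j k l, r j i k l = - r i j k l)
variable (h3 : ∀ i j k l, r k l i j = r i j k l)

include h1 h3

lemma g2 : ∀ i j k l, r i j l k = - r i j k l := fun i j k l => by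
  rw [h3 l k i j, h1 k l i j, h3 i j k l]

lemma g3 : ∀ i j k l, r j i l k = r i j k l := fun i j k l => by
  rw [h1 i j l k, g2 r h1 h3 i j k l, neg_neg]

lemma g5 : ∀ i j k l, r l k i j = - r i j k l := fun i j k l => by
  rw [h1 k l i j, h3 i j k l]

lemma g6 : ∀ i j k l, r k l j i = - r i j k l := fun i j k l => by
  rw [g2 r h1 h3 k l i j, h3 i j k l]

lemma g7 : ∀ i j k l, r l k j i = r i j k l := fun i j k l => by
  rw [g3 r h1 h3 k l i j, h3 i j k l]

lemma z1 : ∀ i k l, r i i k l = 0 := fun i k l => by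
  have := h1 i i k l; linarith

lemma z2 : ∀ i j k, r i j k k = 0 := fun i j k => by
  have := g2 r h1 h3 i j k k; linarith

lemma rc_24 : ∀ a b, (∑ m, r a m b m) = Rc r a b := fun a b =>
  Finset.sum_congr rfl fun m _ => g3 r h1 h3 m a m b

lemma rc_23 : ∀ a b, (∑ m, r a m m b) = - Rc r a b := by
  intro a b
  rw [Rc, ← Finset.sum_neg_distrib]
  exact Finset.sum_congr rfl fun m _ => by rw [h1 m a m b]

lemma rc_symm : ∀ a b, Rc r a b = Rc r b a := fun a b =>
  Finset.sum_congr rfl fun m _ => h3 m b m a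

end Sym

/- sum reordering helpers -/
lemma sum_comm_12 (f : Fin n → Fin n → Fin n → Fin n → ℝ) :
    ∑ a, ∑ b, ∑ c, ∑ d, f a b c d = ∑ b, ∑ a, ∑ c, ∑ d, f a b c d :=
  Finset.sum_comm

lemma sum_comm_23 (f : Fin n → Fin n → Fin n → Fin n → ℝ) :
    ∑ a, ∑ b, ∑ c, ∑ d, f a b c d = ∑ a, ∑ c, ∑ b, ∑ d, f a b c d :=
  Finset.sum_congr rfl fun a _ => Finset.sum_comm

lemma sum_comm_34 (f : Fin n → Fin n → Fin n → Fin n → ℝ) :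
    ∑ a, ∑ b, ∑ c, ∑ d, f a b c d = ∑ a, ∑ b, ∑ d, ∑ c, f a b c d :=
  Finset.sum_congr rfl fun a _ => Finset.sum_congr rfl fun b _ => Finset.sum_comm

/- separated (Sc²-type) evaluation -/
lemma sumSc1 : ∑ i, ∑ j, ∑ k, ∑ l, r i j i j * r k l k l = ScQ r * ScQ r := by
  unfold ScQ
  simp only [← Finset.mul_sum, ← Finset.sum_mul]

/- P-type shape -/
lemma sumP_shape (F G : Fin n → Fin n → Fin n → ℝ) :
    ∑ i, ∑ j, ∑ k, ∑ l, F i j k * G j k l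
      = ∑ j, ∑ k, (∑ i, F i j k) * (∑ l, G j k l) := by
  simp only [← Finset.mul_sum]
  rw [Finset.sum_comm]
  refine Finset.sum_congr rfl fun j _ => ?_
  rw [Finset.sum_comm]
  exact Finset.sum_congr rfl fun k _ => by rw [← Finset.sum_mul]

end Core

end

end AvezAux
namespace AvezAux

open Finset

noncomputable section

section Core2

variable {n : ℕ}
variable (r : Fin n → Fin n → Fin n → Fin n → ℝ)

lemma rc_def : ∀ a b, (∑ m, r m a m b) = Rc r a b := fun _ _ => rfl

lemma sumSc2 : ∑ i, ∑ j, ∑ k, ∑ l, r i k i k * r j l j l = ScQ r * ScQ r :=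
  (sum_comm_23 fun a b c d => r a c a c * r b d b d).trans (sumSc1 r)

lemma sumSc3 : ∑ i, ∑ j, ∑ k, ∑ l, r i l i l * r j k j k = ScQ r * ScQ r := by
  calc ∑ i, ∑ j, ∑ k, ∑ l, r i l i l * r j k j k
      = ∑ i, ∑ j, ∑ l, ∑ k, r i l i l * r j k j k := sum_comm_34 _
    _ = ∑ i, ∑ l, ∑ j, ∑ k, r i l i l * r j k j k := sum_comm_23 _
    _ = ScQ r * ScQ r := sumSc1 r

lemma sumA1 : ∑ i, ∑ j, ∑ k, ∑ l, r i j k l * r i j k l = AQ r := rfl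

lemma sumA2 : ∑ i, ∑ j, ∑ k, ∑ l, r i k j l * r i k j l = AQ r :=
  (sum_comm_23 fun a b c d => r a c b d * r a c b d).trans rfl

lemma sumA3 : ∑ i, ∑ j, ∑ k, ∑ l, r i l j k * r i l j k = AQ r := by
  calc ∑ i, ∑ j, ∑ k, ∑ l, r i l j k * r i l j k
      = ∑ i, ∑ j, ∑ l, ∑ k, r i l j k * r i l j k := sum_comm_34 _
    _ = ∑ i, ∑ l, ∑ j, ∑ k, r i l j k * r i l j k := sum_comm_23 _
    _ = AQ r := rfl

section PP

variable (h1 : ∀ i j k l, r j i k l = - r i j k l)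
variable (h3 : ∀ i j k l, r k l i j = r i j k l)

include h1 h3

lemma sumP1 : ∑ i, ∑ j, ∑ k, ∑ l, r i j i k * r j l k l = PQ r := by
  rw [sumP_shape (fun a b c => r a b a c) (fun b c d => r b d c d)]
  unfold PQ
  refine Finset.sum_congr rfl fun b _ => Finset.sum_congr rfl fun c _ => ?_
  rw [rc_24 r h1 h3 b c, rc_def]

lemma sumP2 : ∑ i, ∑ j, ∑ k, ∑ l, r i j i l * r j k k l = - PQ r := by
  calc ∑ i, ∑ j, ∑ k, ∑ l, r i j i l * r j k k l
      = ∑ i, ∑ j, ∑ l, ∑ k, r i j i l * r j k k l := sum_comm_34 _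
    _ = ∑ j, ∑ l, (∑ i, r i j i l) * (∑ k, r j k k l) :=
        sumP_shape (fun a b c => r a b a c) (fun b c d => r b d d c)
    _ = - PQ r := by
        unfold PQ
        simp only [← Finset.sum_neg_distrib]
        refine Finset.sum_congr rfl fun b _ => Finset.sum_congr rfl fun c _ => ?_
        rw [rc_23 r h1 h3 b c, rc_def]
        ring

lemma sumP3 : ∑ i, ∑ j, ∑ k, ∑ l, r i j j k * r i l k l = - PQ r := by
  calc ∑ i, ∑ j, ∑ k, ∑ l, r i j j k * r i l k l
      = ∑ j, ∑ i, ∑ k, ∑ l, r i j j k * r i l k l := sum_comm_12 _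
    _ = ∑ i, ∑ k, (∑ j, r i j j k) * (∑ l, r i l k l) :=
        sumP_shape (fun a b c => r b a a c) (fun b c d => r b d c d)
    _ = - PQ r := by
        unfold PQ
        simp only [← Finset.sum_neg_distrib]
        refine Finset.sum_congr rfl fun b _ => Finset.sum_congr rfl fun c _ => ?_
        rw [rc_23 r h1 h3 b c, rc_24 r h1 h3 b c]
        ring

lemma sumP4 : ∑ i, ∑ j, ∑ k, ∑ l, r i j j l * r i k k l = PQ r := by
  calc ∑ i, ∑ j, ∑ k, ∑ l, r i j j l * r i k k l
      = ∑ j, ∑ i, ∑ k, ∑ l, r i j j l * r i k k l := sum_comm_12 _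
    _ = ∑ j, ∑ i, ∑ l, ∑ k, r i j j l * r i k k l := sum_comm_34 _
    _ = ∑ i, ∑ l, (∑ j, r i j j l) * (∑ k, r i k k l) :=
        sumP_shape (fun a b c => r b a a c) (fun b c d => r b d d c)
    _ = PQ r := by
        unfold PQ
        refine Finset.sum_congr rfl fun b _ => Finset.sum_congr rfl fun c _ => ?_
        rw [rc_23 r h1 h3 b c]
        ring

lemma sumP5 : ∑ i, ∑ j, ∑ k, ∑ l, r i k i l * r j k j l = PQ r := by
  calc ∑ i, ∑ j, ∑ k, ∑ l, r i k i l * r j k j l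
      = ∑ i, ∑ k, ∑ j, ∑ l, r i k i l * r j k j l := sum_comm_23 _
    _ = ∑ i, ∑ k, ∑ l, ∑ j, r i k i l * r j k j l := sum_comm_34 _
    _ = ∑ k, ∑ l, (∑ i, r i k i l) * (∑ j, r j k j l) :=
        sumP_shape (fun a b c => r a b a c) (fun b c d => r d b d c)
    _ = PQ r := by
        unfold PQ
        exact Finset.sum_congr rfl fun b _ => Finset.sum_congr rfl fun c _ => rfl

lemma sumP6 : ∑ i, ∑ j, ∑ k, ∑ l, r i k j k * r i l j l = PQ r := by
  calc ∑ i, ∑ j, ∑ k, ∑ l, r i k j k * r i l j l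
      = ∑ i, ∑ k, ∑ j, ∑ l, r i k j k * r i l j l := sum_comm_23 _
    _ = ∑ k, ∑ i, ∑ j, ∑ l, r i k j k * r i l j l := sum_comm_12 _
    _ = ∑ i, ∑ j, (∑ k, r i k j k) * (∑ l, r i l j l) :=
        sumP_shape (fun a b c => r b a c a) (fun b c d => r b d c d)
    _ = PQ r := by
        unfold PQ
        refine Finset.sum_congr rfl fun b _ => Finset.sum_congr rfl fun c _ => ?_
        rw [rc_24 r h1 h3 b c]

end PP

lemma sum4_add (f g : Fin n → Fin n → Fin n → Fin n → ℝ) :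
    ∑ i, ∑ j, ∑ k, ∑ l, (f i j k l + g i j k l)
      = (∑ i, ∑ j, ∑ k, ∑ l, f i j k l) + (∑ i, ∑ j, ∑ k, ∑ l, g i j k l) := by
  simp [Finset.sum_add_distrib]

lemma sum4_sub (f g : Fin n → Fin n → Fin n → Fin n → ℝ) :
    ∑ i, ∑ j, ∑ k, ∑ l, (f i j k l - g i j k l)
      = (∑ i, ∑ j, ∑ k, ∑ l, f i j k l) - (∑ i, ∑ j, ∑ k, ∑ l, g i j k l) := by
  simp [Finset.sum_sub_distrib]

lemma sum4_mulc (c : ℝ) (f : Fin n → Fin n → Fin n → Fin n → ℝ) :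
    ∑ i, ∑ j, ∑ k, ∑ l, (c * f i j k l) = c * ∑ i, ∑ j, ∑ k, ∑ l, f i j k l := by
  simp only [← Finset.mul_sum]

lemma sumPhi (h1 : ∀ i j k l, r j i k l = - r i j k l)
    (h3 : ∀ i j k l, r k l i j = r i j k l) :
    ∑ i, ∑ j, ∑ k, ∑ l, Phi r i j k l
    = 6 * (ScQ r * ScQ r) + 6 * AQ r - 24 * PQ r := by
  unfold Phi
  simp only [sum4_add, sum4_sub, sum4_mulc]
  rw [sumSc1 r, sumSc2 r, sumSc3 r, sumA1 r, sumA2 r, sumA3 r, sumP1 r h1 h3,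
    sumP2 r h1 h3, sumP3 r h1 h3, sumP4 r h1 h3, sumP5 r h1 h3, sumP6 r h1 h3]
  ring

lemma dPhi_01 (h1 : ∀ i j k l, r j i k l = - r i j k l)
    (h3 : ∀ i j k l, r k l i j = r i j k l) (i k l : Fin n) :
    Phi r i i k l = 0 := by
  unfold Phi
  simp only [z1 r h1 h3 i i i, z1 r h1 h3 i k l, h3 i k i l, z1 r h1 h3 i i k, z1 r h1 h3 i i l]
  ring

lemma dPhi_02 (h1 : ∀ i j k l, r j i k l = - r i j k l)
    (h3 : ∀ i j k l, r k l i j = r i j k l) (i j l : Fin n) :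
    Phi r i j i l = 0 := by
  unfold Phi
  simp only [z1 r h1 h3 i i i, g3 r h1 h3 i j i j, z1 r h1 h3 i j l, g6 r h1 h3 i j i l, z2 r h1 h3 i j i, h3 i l j l, h1 i j i l, g2 r h1 h3 i j i j, z1 r h1 h3 i i l, h1 i j j l, z1 r h1 h3 i j i]
  ring

lemma dPhi_03 (h1 : ∀ i j k l, r j i k l = - r i j k l)
    (h3 : ∀ i j k l, r k l i j = r i j k l) (i j k : Fin n) :
    Phi r i j k i = 0 := by
  unfold Phi
  simp only [g3 r h1 h3 i k i k, g3 r h1 h3 i j i j, z1 r h1 h3 i i i, g2 r h1 h3 i j i k, g6 r h1 h3 i j i k, z1 r h1 h3 i j k, g3 r h1 h3 i j i k, z2 r h1 h3 i j i, g6 r h1 h3 i k j k, z1 r h1 h3 i k i, g2 r h1 h3 i j i j, g2 r h1 h3 i k i k, z2 r h1 h3 i k i, g6 r h1 h3 i j j k, z1 r h1 h3 i j i]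
  ring

lemma dPhi_12 (h1 : ∀ i j k l, r j i k l = - r i j k l)
    (h3 : ∀ i j k l, r k l i j = r i j k l) (i j l : Fin n) :
    Phi r i j j l = 0 := by
  unfold Phi
  simp only [z1 r h1 h3 j j j, z2 r h1 h3 i l j, z1 r h1 h3 j j l, z2 r h1 h3 i j j]
  ring

lemma dPhi_13 (h1 : ∀ i j k l, r j i k l = - r i j k l)
    (h3 : ∀ i j k l, r k l i j = r i j k l) (i j k : Fin n) :
    Phi r i j k j = 0 := by
  unfold Phi
  simp only [g3 r h1 h3 j k j k, z1 r h1 h3 j j j, g2 r h1 h3 i j j k, z2 r h1 h3 i k j, z1 r h1 h3 j k j, g2 r h1 h3 j k j k, z2 r h1 h3 i j j, g2 r h1 h3 i k j k, h3 i j i k, z2 r h1 h3 j k j]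
  ring

lemma dPhi_23 (h1 : ∀ i j k l, r j i k l = - r i j k l)
    (h3 : ∀ i j k l, r k l i j = r i j k l) (i j k : Fin n) :
    Phi r i j k k = 0 := by
  unfold Phi
  simp only [z1 r h1 h3 k k k, z2 r h1 h3 i j k, z2 r h1 h3 j k k, z2 r h1 h3 i k k]
  ring
end Core2

end

end AvezAux
namespace AvezAux

open Finset

noncomputable section

set_option maxHeartbeats 2000000 in
lemma key {n : ℕ} (r : Fin n → Fin n → Fin n → Fin n → ℝ) (Rd : DF n)
    (hsupp : ∀ S T, ¬(S.card = 2 ∧ T.card = 2) → Rd S T = 0)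
    (hcomp : ∀ {i j k l : Fin n}, i ≠ j → k ≠ l → Rd {i, j} {k, l} = sg i j * sg k l * r i j k l)
    (h3 : ∀ i j k l, r k l i j = r i j k l)
    {i j k l : Fin n} (hij : i ≠ j) (hik : i ≠ k) (hil : i ≠ l)
    (hjk : j ≠ k) (hjl : j ≠ l) (hkl : k ≠ l) :
    DF.mul Rd Rd (insert i (insert j (insert k {l}))) (insert i (insert j (insert k {l})))
      = Phi r i j k l := by
  have hni : i ∉ (insert j (insert k {l}) : Finset (Fin n)) := by simp [hij, hik, hil]
  have hnj : j ∉ (insert k {l} : Finset (Fin n)) := by simp [hjk, hjl]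
  have hnk : k ∉ ({l} : Finset (Fin n)) := by simp [hkl]
  have hsne : (∅ : Finset (Fin n)) ≠ {l} := Ne.symm (Finset.singleton_ne_empty l)
  have hA0 : ∀ C, Rd ∅ C = 0 := fun C => hsupp _ _ (by simp)
  have hB0 : ∀ A, Rd A ∅ = 0 := fun A => hsupp _ _ (by simp)
  have hA1 : ∀ (x : Fin n) C, Rd {x} C = 0 := fun x C => hsupp _ _ (by simp)
  have hB1 : ∀ A (x : Fin n), Rd A {x} = 0 := fun A x => hsupp _ _ (by simp)
  have hA3jkl : ∀ C, Rd {j, k, l} C = 0 := fun C => hsupp _ _ (by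
    simp [Finset.card_insert_of_notMem, Finset.mem_insert, hjk, hjl, hkl])
  have hB3jkl : ∀ A, Rd A {j, k, l} = 0 := fun A => hsupp _ _ (by
    simp [Finset.card_insert_of_notMem, Finset.mem_insert, hjk, hjl, hkl])
  have hA3ikl : ∀ C, Rd {i, k, l} C = 0 := fun C => hsupp _ _ (by
    simp [Finset.card_insert_of_notMem, Finset.mem_insert, hik, hil, hkl])
  have hB3ikl : ∀ A, Rd A {i, k, l} = 0 := fun A => hsupp _ _ (by
    simp [Finset.card_insert_of_notMem, Finset.mem_insert, hik, hil, hkl])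
  have hA3ijl : ∀ C, Rd {i, j, l} C = 0 := fun C => hsupp _ _ (by
    simp [Finset.card_insert_of_notMem, Finset.mem_insert, hij, hil, hjl])
  have hB3ijl : ∀ A, Rd A {i, j, l} = 0 := fun A => hsupp _ _ (by
    simp [Finset.card_insert_of_notMem, Finset.mem_insert, hij, hil, hjl])
  have hA3ijk : ∀ C, Rd {i, j, k} C = 0 := fun C => hsupp _ _ (by
    simp [Finset.card_insert_of_notMem, Finset.mem_insert, hij, hik, hjk])
  have hB3ijk : ∀ A, Rd A {i, j, k} = 0 := fun A => hsupp _ _ (by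
    simp [Finset.card_insert_of_notMem, Finset.mem_insert, hij, hik, hjk])
  have hA4 : ∀ C, Rd (insert i (insert j (insert k {l}))) C = 0 := fun C => hsupp _ _ (by
    simp [Finset.card_insert_of_notMem, Finset.mem_insert, hij, hik, hil, hjk, hjl, hkl])
  have hB4 : ∀ A, Rd A (insert i (insert j (insert k {l}))) = 0 := fun A => hsupp _ _ (by
    simp [Finset.card_insert_of_notMem, Finset.mem_insert, hij, hik, hil, hjk, hjl, hkl])
  have hdij : (insert i (insert j (insert k {l})) : Finset (Fin n)) \ {i, j} = {k, l} := by
    ext x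
    simp only [Finset.mem_sdiff, Finset.mem_insert, Finset.mem_singleton]
    constructor
    · rintro ⟨hx, hn⟩
      push_neg at hn
      rcases hx with rfl | rfl | rfl | rfl
      · exact absurd rfl hn.1
      · exact absurd rfl hn.2
      · exact Or.inl rfl
      · exact Or.inr rfl
    · rintro (rfl | rfl)
      · exact ⟨Or.inr (Or.inr (Or.inl rfl)), by push_neg; exact ⟨(Ne.symm hik), (Ne.symm hjk)⟩⟩
      · exact ⟨Or.inr (Or.inr (Or.inr (rfl))), by push_neg; exact ⟨(Ne.symm hil), (Ne.symm hjl)⟩⟩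
  have hdik : (insert i (insert j (insert k {l})) : Finset (Fin n)) \ {i, k} = {j, l} := by
    ext x
    simp only [Finset.mem_sdiff, Finset.mem_insert, Finset.mem_singleton]
    constructor
    · rintro ⟨hx, hn⟩
      push_neg at hn
      rcases hx with rfl | rfl | rfl | rfl
      · exact absurd rfl hn.1
      · exact Or.inl rfl
      · exact absurd rfl hn.2
      · exact Or.inr rfl
    · rintro (rfl | rfl)
      · exact ⟨Or.inr (Or.inl rfl), by push_neg; exact ⟨(Ne.symm hij), hjk⟩⟩
      · exact ⟨Or.inr (Or.inr (Or.inr (rfl))), by push_neg; exact ⟨(Ne.symm hil), (Ne.symm hkl)⟩⟩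
  have hdil : (insert i (insert j (insert k {l})) : Finset (Fin n)) \ {i, l} = {j, k} := by
    ext x
    simp only [Finset.mem_sdiff, Finset.mem_insert, Finset.mem_singleton]
    constructor
    · rintro ⟨hx, hn⟩
      push_neg at hn
      rcases hx with rfl | rfl | rfl | rfl
      · exact absurd rfl hn.1
      · exact Or.inl rfl
      · exact Or.inr rfl
      · exact absurd rfl hn.2
    · rintro (rfl | rfl)
      · exact ⟨Or.inr (Or.inl rfl), by push_neg; exact ⟨(Ne.symm hij), hjl⟩⟩
      · exact ⟨Or.inr (Or.inr (Or.inl rfl)), by push_neg; exact ⟨(Ne.symm hik), hkl⟩⟩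
  have hdjk : (insert i (insert j (insert k {l})) : Finset (Fin n)) \ {j, k} = {i, l} := by
    ext x
    simp only [Finset.mem_sdiff, Finset.mem_insert, Finset.mem_singleton]
    constructor
    · rintro ⟨hx, hn⟩
      push_neg at hn
      rcases hx with rfl | rfl | rfl | rfl
      · exact Or.inl rfl
      · exact absurd rfl hn.1
      · exact absurd rfl hn.2
      · exact Or.inr rfl
    · rintro (rfl | rfl)
      · exact ⟨Or.inl rfl, by push_neg; exact ⟨hij, hik⟩⟩
      · exact ⟨Or.inr (Or.inr (Or.inr (rfl))), by push_neg; exact ⟨(Ne.symm hjl), (Ne.symm hkl)⟩⟩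
  have hdjl : (insert i (insert j (insert k {l})) : Finset (Fin n)) \ {j, l} = {i, k} := by
    ext x
    simp only [Finset.mem_sdiff, Finset.mem_insert, Finset.mem_singleton]
    constructor
    · rintro ⟨hx, hn⟩
      push_neg at hn
      rcases hx with rfl | rfl | rfl | rfl
      · exact Or.inl rfl
      · exact absurd rfl hn.1
      · exact Or.inr rfl
      · exact absurd rfl hn.2
    · rintro (rfl | rfl)
      · exact ⟨Or.inl rfl, by push_neg; exact ⟨hij, hil⟩⟩
      · exact ⟨Or.inr (Or.inr (Or.inl rfl)), by push_neg; exact ⟨(Ne.symm hjk), hkl⟩⟩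
  have hdkl : (insert i (insert j (insert k {l})) : Finset (Fin n)) \ {k, l} = {i, j} := by
    ext x
    simp only [Finset.mem_sdiff, Finset.mem_insert, Finset.mem_singleton]
    constructor
    · rintro ⟨hx, hn⟩
      push_neg at hn
      rcases hx with rfl | rfl | rfl | rfl
      · exact Or.inl rfl
      · exact Or.inr rfl
      · exact absurd rfl hn.1
      · exact absurd rfl hn.2
    · rintro (rfl | rfl)
      · exact ⟨Or.inl rfl, by push_neg; exact ⟨hik, hil⟩⟩
      · exact ⟨Or.inr (Or.inl rfl), by push_neg; exact ⟨hjk, hjl⟩⟩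
  unfold DF.mul
  simp only [Finset.sum_powerset_insert hni, Finset.sum_powerset_insert hnj,
    Finset.sum_powerset_insert hnk, powerset_single, Finset.sum_pair hsne,
    Finset.insert_empty,
    hA0, hB0, hA1, hB1, hA3jkl, hA3ikl, hA3ijl, hA3ijk, hB3jkl, hB3ikl, hB3ijl, hB3ijk, hA4, hB4,
    mul_zero, zero_mul, Finset.sum_const_zero, add_zero, zero_add]
  simp only [hdij, hdik, hdil, hdjk, hdjl, hdkl]
  simp only [sh_pair hij hik hil hjk hjl hkl,
    sh_pair hik hij hil (Ne.symm hjk) hkl hjl,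
    sh_pair hil hij hik (Ne.symm hjl) (Ne.symm hkl) hjk,
    sh_pair hjk (Ne.symm hij) hjl (Ne.symm hik) hkl hil,
    sh_pair hjl (Ne.symm hij) hjk (Ne.symm hil) (Ne.symm hkl) hik,
    sh_pair hkl (Ne.symm hik) (Ne.symm hjk) (Ne.symm hil) (Ne.symm hjl) hij]
  simp only [hcomp hij hij,
    hcomp hij hik,
    hcomp hij hil,
    hcomp hij hjk,
    hcomp hij hjl,
    hcomp hij hkl,
    hcomp hik hij,
    hcomp hik hik,
    hcomp hik hil,
    hcomp hik hjk,
    hcomp hik hjl,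
    hcomp hik hkl,
    hcomp hil hij,
    hcomp hil hik,
    hcomp hil hil,
    hcomp hil hjk,
    hcomp hil hjl,
    hcomp hil hkl,
    hcomp hjk hij,
    hcomp hjk hik,
    hcomp hjk hil,
    hcomp hjk hjk,
    hcomp hjk hjl,
    hcomp hjk hkl,
    hcomp hjl hij,
    hcomp hjl hik,
    hcomp hjl hil,
    hcomp hjl hjk,
    hcomp hjl hjl,
    hcomp hjl hkl,
    hcomp hkl hij,
    hcomp hkl hik,
    hcomp hkl hil,
    hcomp hkl hjk,
    hcomp hkl hjl,
    hcomp hkl hkl]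
  simp only [sg_comm hij, sg_comm hik, sg_comm hil, sg_comm hjk, sg_comm hjl, sg_comm hkl]
  simp only [h3 i j i k, h3 i j i l, h3 i j j k, h3 i j j l, h3 i j k l, h3 i k i l, h3 i k j k, h3 i k j l, h3 i k k l, h3 i l j k, h3 i l j l, h3 i l k l, h3 j k j l, h3 j k k l, h3 j l k l]
  unfold Phi
  ring_nf
  simp only [sg_sq, one_mul, mul_one]
  all_goals ring

end

end AvezAux
namespace AvezAux

open Finset

noncomputable section

variable {n : ℕ}

lemma contr_diag (ω : DF n) (S : Finset (Fin n)) :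
    DF.contr ω S S = ∑ i, if i ∈ S then 0 else ω (insert i S) (insert i S) := by
  unfold DF.contr
  refine Finset.sum_congr rfl fun x _ => ?_
  simp only [or_self]
  by_cases hx : x ∈ S
  · rw [if_pos hx, if_pos hx]
  · rw [if_neg hx, if_neg hx, sh_mul_self, one_mul]

lemma mul_one_left (ω : DF n) : DF.mul (DF.one n) ω = ω := by
  funext S T
  unfold DF.mul DF.one
  rw [Finset.sum_eq_single_of_mem ∅ (Finset.empty_mem_powerset S)]
  · rw [Finset.sum_eq_single_of_mem ∅ (Finset.empty_mem_powerset T)]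
    · simp [sh_empty]
    · intro b _ hb; simp [hb]
  · intro b _ hb
    refine Finset.sum_eq_zero fun c _ => ?_
    simp [hb]

lemma pow_two (ω : DF n) : DF.pow ω 2 = DF.mul ω ω := by
  show DF.mul (DF.mul (DF.pow ω 0) ω) ω = DF.mul ω ω
  show DF.mul (DF.mul (DF.one n) ω) ω = DF.mul ω ω
  rw [mul_one_left]

lemma contrN_succ (m : ℕ) (ω : DF n) :
    DF.contrN (m + 1) ω = DF.contr (DF.contrN m ω) :=
  Function.iterate_succ_apply' _ _ _

lemma contrN_one (ω : DF n) : DF.contrN 1 ω = DF.contr ω := by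
  rw [contrN_succ]; rfl

lemma contr_supp (ω : DF n)
    (hsupp : ∀ S T, ¬(S.card = 2 ∧ T.card = 2) → ω S T = 0)
    (S T : Finset (Fin n)) (hST : ¬(S.card = 1 ∧ T.card = 1)) :
    DF.contr ω S T = 0 := by
  unfold DF.contr
  refine Finset.sum_eq_zero fun x _ => ?_
  by_cases hx : x ∈ S ∨ x ∈ T
  · rw [if_pos hx]
  · rw [if_neg hx]
    push_neg at hx
    rw [hsupp _ _ (by
      rw [Finset.card_insert_of_notMem hx.1, Finset.card_insert_of_notMem hx.2]
      omega)]
    ring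

lemma contr_pair (Rd : DF n) (r : Fin n → Fin n → Fin n → Fin n → ℝ)
    (hcomp : ∀ {i j k l : Fin n}, i ≠ j → k ≠ l → Rd {i, j} {k, l} = sg i j * sg k l * r i j k l)
    (h1 : ∀ i j k l, r j i k l = - r i j k l)
    (h3 : ∀ i j k l, r k l i j = r i j k l)
    (i j : Fin n) :
    DF.contr Rd {i} {j} = Rc r i j := by
  unfold DF.contr
  rw [show Rc r i j = ∑ m, r m i m j from rfl]
  refine Finset.sum_congr rfl fun x _ => ?_
  by_cases hx : x ∈ ({i} : Finset (Fin n)) ∨ x ∈ ({j} : Finset (Fin n))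
  · rw [if_pos hx]
    simp only [Finset.mem_singleton] at hx
    rcases hx with rfl | rfl
    · exact (z1 r h1 h3 x x j).symm
    · exact (z2 r h1 h3 x i x).symm
  · rw [if_neg hx]
    push_neg at hx
    simp only [Finset.mem_singleton] at hx
    rw [hcomp hx.1 hx.2, sh_single hx.1, sh_single hx.2]
    calc sg x i * sg x j * (sg x i * sg x j * r x i x j)
        = (sg x i * sg x i) * ((sg x j * sg x j) * r x i x j) := by ring
      _ = r x i x j := by rw [sg_mul_self, sg_mul_self]; ring

/-- conversion: sum over all finsets supported in card-2 sets to a sum over sorted pairs -/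
lemma sum_two_sets (f : Finset (Fin n) → ℝ) (h0 : ∀ S, S.card ≠ 2 → f S = 0) :
    ∑ S : Finset (Fin n), f S
      = ∑ p ∈ Finset.univ.filter (fun p : Fin n × Fin n => p.1 < p.2), f {p.1, p.2} := by
  have himg : (Finset.univ.filter (fun p : Fin n × Fin n => p.1 < p.2)).image
      (fun p : Fin n × Fin n => ({p.1, p.2} : Finset (Fin n)))
      = Finset.univ.filter (fun S : Finset (Fin n) => S.card = 2) := by
    ext S
    simp only [Finset.mem_image, Finset.mem_filter, Finset.mem_univ, true_and]
    constructor
    · rintro ⟨p, hp, rfl⟩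
      exact Finset.card_pair (ne_of_lt hp)
    · intro hS
      obtain ⟨a, b, hab, rfl⟩ := Finset.card_eq_two.mp hS
      rcases hab.lt_or_gt with h | h
      · exact ⟨(a, b), h, rfl⟩
      · exact ⟨(b, a), h, Finset.pair_comm b a⟩
  rw [← Finset.sum_filter_of_ne (p := fun S : Finset (Fin n) => S.card = 2)
      (fun x _ hx => by by_contra hc; exact hx (h0 x hc)), ← himg,
    Finset.sum_image ?_]
  intro p hp q hq hpq
  simp only [Finset.coe_filter, Set.mem_setOf_eq, Finset.mem_filter, Finset.mem_univ, true_and] at hp hq hpq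
  have m1 : p.1 = q.1 ∨ p.1 = q.2 := by
    have : p.1 ∈ ({q.1, q.2} : Finset (Fin n)) := hpq ▸ Finset.mem_insert_self _ _
    simpa using this
  have m2 : p.2 = q.1 ∨ p.2 = q.2 := by
    have : p.2 ∈ ({q.1, q.2} : Finset (Fin n)) :=
      hpq ▸ (by simp : p.2 ∈ ({p.1, p.2} : Finset (Fin n)))
    simpa using this
  rcases m1 with e1 | e1
  · rcases m2 with e2 | e2
    · rw [e1, e2] at hp; exact absurd hp (lt_irrefl _)
    · exact Prod.ext e1 e2
  · rcases m2 with e2 | e2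
    · rw [e1, e2] at hp; exact absurd hp (asymm hq)
    · rw [e1, e2] at hp; exact absurd hp (lt_irrefl _)

lemma sum_one_sets (f : Finset (Fin n) → ℝ) (h0 : ∀ S, S.card ≠ 1 → f S = 0) :
    ∑ S : Finset (Fin n), f S = ∑ i, f {i} := by
  have himg : (Finset.univ : Finset (Fin n)).image (fun i => ({i} : Finset (Fin n)))
      = Finset.univ.filter (fun S : Finset (Fin n) => S.card = 1) := by
    ext S
    simp only [Finset.mem_image, Finset.mem_filter, Finset.mem_univ, true_and]
    constructor
    · rintro ⟨i, _, rfl⟩; exact Finset.card_singleton i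
    · intro hS
      obtain ⟨a, rfl⟩ := Finset.card_eq_one.mp hS
      exact ⟨a, rfl⟩
  rw [← Finset.sum_filter_of_ne (p := fun S : Finset (Fin n) => S.card = 1)
      (fun x _ hx => by by_contra hc; exact hx (h0 x hc)), ← himg,
    Finset.sum_image (fun a _ b _ h => Finset.singleton_injective h)]

/-- splitting a symmetric double sum with vanishing diagonal -/
lemma sum_split (g : Fin n → Fin n → ℝ) (hd : ∀ i, g i i = 0) :
    ∑ i, ∑ j, g i j
      = ∑ p ∈ Finset.univ.filter (fun p : Fin n × Fin n => p.1 < p.2), (g p.1 p.2 + g p.2 p.1) := by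
  have e0 : ∑ i, ∑ j, g i j = ∑ p : Fin n × Fin n, g p.1 p.2 := by
    rw [← Finset.univ_product_univ, Finset.sum_product]
  rw [e0, Finset.sum_add_distrib]
  have e1 : ∑ p ∈ Finset.univ.filter (fun p : Fin n × Fin n => p.1 < p.2), g p.2 p.1
      = ∑ p ∈ Finset.univ.filter (fun p : Fin n × Fin n => p.2 < p.1), g p.1 p.2 := by
    refine Finset.sum_nbij' (fun p => (p.2, p.1)) (fun p => (p.2, p.1)) ?_ ?_ ?_ ?_ ?_ <;>
      simp [Finset.mem_filter]
  rw [e1]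
  rw [← Finset.sum_filter_add_sum_filter_not (Finset.univ : Finset (Fin n × Fin n))
      (fun p => p.1 < p.2) (fun p => g p.1 p.2)]
  congr 1
  rw [← Finset.sum_filter_add_sum_filter_not
      (Finset.univ.filter (fun p : Fin n × Fin n => ¬ p.1 < p.2))
      (fun p => p.2 < p.1) (fun p => g p.1 p.2)]
  have e2 : (Finset.univ.filter (fun p : Fin n × Fin n => ¬ p.1 < p.2)).filter
      (fun p => p.2 < p.1) = Finset.univ.filter (fun p : Fin n × Fin n => p.2 < p.1) := by
    rw [Finset.filter_filter]
    exact Finset.filter_congr fun p _ => by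
      constructor
      · exact fun h => h.2
      · exact fun h => ⟨asymm h, h⟩
  rw [e2]
  have e3 : ∑ p ∈ (Finset.univ.filter (fun p : Fin n × Fin n => ¬ p.1 < p.2)).filter
      (fun p => ¬ p.2 < p.1), g p.1 p.2 = 0 := by
    refine Finset.sum_eq_zero fun p hp => ?_
    simp only [Finset.mem_filter] at hp
    have : p.1 = p.2 := le_antisymm (not_lt.mp hp.2) (not_lt.mp hp.1.2)
    rw [show p.1 = p.2 from this, hd]
  rw [e3, add_zero]

end

end AvezAux
namespace AvezAux

open Finset

noncomputable section

variable {n : ℕ}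

section Eval

variable (Rd : DF n) (r : Fin n → Fin n → Fin n → Fin n → ℝ)
variable (hsupp : ∀ S T, ¬(S.card = 2 ∧ T.card = 2) → Rd S T = 0)
variable (hcomp : ∀ {i j k l : Fin n}, i ≠ j → k ≠ l →
    Rd {i, j} {k, l} = sg i j * sg k l * r i j k l)
variable (h1 : ∀ i j k l, r j i k l = - r i j k l)
variable (h3 : ∀ i j k l, r k l i j = r i j k l)

include hsupp hcomp h1 h3

lemma contr4_eval :
    DF.contrN 4 (DF.mul Rd Rd) ∅ ∅ = ∑ i, ∑ j, ∑ k, ∑ l, Phi r l k j i := by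
  have c1 : ∀ (a b c : Fin n), a ≠ b → a ≠ c → b ≠ c →
      DF.contr (DF.mul Rd Rd) (insert a (insert b {c})) (insert a (insert b {c}))
        = ∑ x, Phi r x a b c := by
    intro a b c hab hac hbc
    rw [contr_diag]
    refine Finset.sum_congr rfl fun x _ => ?_
    by_cases hx : x ∈ (insert a (insert b {c}) : Finset (Fin n))
    · rw [if_pos hx]
      simp only [Finset.mem_insert, Finset.mem_singleton] at hx
      rcases hx with rfl | rfl | rfl
      · exact (dPhi_01 r h1 h3 x b c).symm
      · exact (dPhi_02 r h1 h3 x a c).symm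
      · exact (dPhi_03 r h1 h3 x a b).symm
    · rw [if_neg hx]
      simp only [Finset.mem_insert, Finset.mem_singleton, not_or] at hx
      exact key r Rd hsupp hcomp h3 hx.1 hx.2.1 hx.2.2 hab hac hbc
  have c2 : ∀ (a b : Fin n), a ≠ b →
      DF.contr (DF.contr (DF.mul Rd Rd)) (insert a {b}) (insert a {b})
        = ∑ x, ∑ y, Phi r y x a b := by
    intro a b hab
    rw [contr_diag]
    refine Finset.sum_congr rfl fun x _ => ?_
    by_cases hx : x ∈ (insert a {b} : Finset (Fin n))
    · rw [if_pos hx]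
      simp only [Finset.mem_insert, Finset.mem_singleton] at hx
      rcases hx with rfl | rfl
      · exact (Finset.sum_eq_zero fun y _ => dPhi_12 r h1 h3 y x b).symm
      · exact (Finset.sum_eq_zero fun y _ => dPhi_13 r h1 h3 y x a).symm
    · rw [if_neg hx]
      simp only [Finset.mem_insert, Finset.mem_singleton, not_or] at hx
      exact c1 x a b hx.1 hx.2 hab
  have c3 : ∀ (a : Fin n),
      DF.contr (DF.contr (DF.contr (DF.mul Rd Rd))) {a} {a}
        = ∑ x, ∑ y, ∑ z, Phi r z y x a := by
    intro a
    rw [contr_diag]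
    refine Finset.sum_congr rfl fun x _ => ?_
    by_cases hx : x ∈ ({a} : Finset (Fin n))
    · rw [if_pos hx]
      simp only [Finset.mem_singleton] at hx
      subst hx
      exact (Finset.sum_eq_zero fun y _ => Finset.sum_eq_zero fun z _ =>
        dPhi_23 r h1 h3 z y x).symm
    · rw [if_neg hx]
      simp only [Finset.mem_singleton] at hx
      exact c2 x a hx
  show DF.contr (DF.contr (DF.contr (DF.contr (DF.mul Rd Rd)))) ∅ ∅ = _
  rw [contr_diag]
  refine Finset.sum_congr rfl fun x _ => ?_
  rw [if_neg (Finset.notMem_empty x)]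
  exact c3 x

lemma scal_eval : DF.toScalar (DF.contrN 2 Rd) = ScQ r := by
  show DF.contr (DF.contr Rd) ∅ ∅ = ScQ r
  rw [contr_diag]
  have e1 : ∀ x : Fin n, DF.contr Rd (insert x ∅) (insert x ∅) = Rc r x x := by
    intro x
    rw [Finset.insert_empty]
    exact contr_pair Rd r hcomp h1 h3 x x
  calc ∑ x, (if x ∈ (∅ : Finset (Fin n)) then 0
        else DF.contr Rd (insert x ∅) (insert x ∅))
      = ∑ x, Rc r x x := by
        refine Finset.sum_congr rfl fun x _ => ?_
        rw [if_neg (Finset.notMem_empty x), e1]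
    _ = ∑ x, ∑ m, r m x m x := rfl
    _ = ∑ m, ∑ x, r m x m x := Finset.sum_comm
    _ = ScQ r := rfl

lemma dinner_c_eval :
    DF.dinner (DF.contrN 1 Rd) (DF.contrN 1 Rd) = PQ r := by
  rw [contrN_one]
  unfold DF.dinner
  have hsupp1 : ∀ S T, ¬(S.card = 1 ∧ T.card = 1) → DF.contr Rd S T = 0 :=
    contr_supp Rd hsupp
  rw [sum_one_sets (fun S => ∑ T : Finset (Fin n), DF.contr Rd S T * DF.contr Rd S T)
      (fun S hS => Finset.sum_eq_zero fun T _ => by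
        rw [hsupp1 S T (fun hc => hS hc.1)]; ring)]
  unfold PQ
  refine Finset.sum_congr rfl fun i _ => ?_
  rw [sum_one_sets (fun T => DF.contr Rd {i} T * DF.contr Rd {i} T)
      (fun T hT => by simp only [hsupp1 {i} T (fun hc => hT hc.2)]; ring)]
  refine Finset.sum_congr rfl fun j _ => ?_
  rw [contr_pair Rd r hcomp h1 h3 i j]

lemma dinner_eval : AQ r = 4 * DF.dinner Rd Rd := by
  unfold DF.dinner
  have step1 : ∑ S : Finset (Fin n), ∑ T : Finset (Fin n), Rd S T * Rd S T
      = ∑ p ∈ Finset.univ.filter (fun p : Fin n × Fin n => p.1 < p.2),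
          ∑ q ∈ Finset.univ.filter (fun q : Fin n × Fin n => q.1 < q.2),
            r p.1 p.2 q.1 q.2 * r p.1 p.2 q.1 q.2 := by
    rw [sum_two_sets (fun S => ∑ T : Finset (Fin n), Rd S T * Rd S T)
        (fun S hS => Finset.sum_eq_zero fun T _ => by
          rw [hsupp S T (fun hc => hS hc.1)]; ring)]
    refine Finset.sum_congr rfl fun p hp => ?_
    simp only [Finset.mem_filter, Finset.mem_univ, true_and] at hp
    rw [sum_two_sets (fun T => Rd {p.1, p.2} T * Rd {p.1, p.2} T)
        (fun T hT => by simp only [hsupp {p.1, p.2} T (fun hc => hT hc.2)]; ring)]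
    refine Finset.sum_congr rfl fun q hq => ?_
    simp only [Finset.mem_filter, Finset.mem_univ, true_and] at hq
    rw [hcomp (ne_of_lt hp) (ne_of_lt hq), sg_pos hp, sg_pos hq]
    ring
  rw [step1]
  unfold AQ
  rw [sum_split (fun i j => ∑ k, ∑ l, r i j k l * r i j k l)
      (fun i => Finset.sum_eq_zero fun k _ => Finset.sum_eq_zero fun l _ => by
        simp only [z1 r h1 h3 i k l]; ring)]
  rw [Finset.mul_sum]
  refine Finset.sum_congr rfl fun p hp => ?_
  have inner : ∀ a b : Fin n, ∑ k, ∑ l, r a b k l * r a b k l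
      = ∑ q ∈ Finset.univ.filter (fun q : Fin n × Fin n => q.1 < q.2),
          2 * (r a b q.1 q.2 * r a b q.1 q.2) := by
    intro a b
    rw [sum_split (fun k l => r a b k l * r a b k l)
        (fun k => by simp only [z2 r h1 h3 a b k]; ring)]
    refine Finset.sum_congr rfl fun q hq => ?_
    rw [g2 r h1 h3 a b q.1 q.2]
    ring
  have flip : ∀ k l : Fin n, r p.2 p.1 k l = - r p.1 p.2 k l := fun k l => h1 p.1 p.2 k l
  rw [inner p.1 p.2, inner p.2 p.1]
  rw [← Finset.sum_add_distrib, Finset.mul_sum]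
  refine Finset.sum_congr rfl fun q hq => ?_
  rw [flip q.1 q.2]
  ring

end Eval

end

end AvezAux
namespace AvezAux

open Finset

noncomputable section

variable {n : ℕ} {V : Type*} [NormedAddCommGroup V] [InnerProductSpace ℝ V]
variable (e : OrthonormalBasis (Fin n) ℝ V) (R : V → V → V → V → ℝ)

lemma ofCurv_supp : ∀ S T : Finset (Fin n), ¬(S.card = 2 ∧ T.card = 2) →
    ofCurv e R S T = 0 := by
  intro S T h
  unfold ofCurv ofForm
  rw [dif_neg h]

lemma pair_orderEmb {i j : Fin n} (hij : i < j) (h2 : ({i, j} : Finset (Fin n)).card = 2) :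
    ∀ m : Fin 2, (({i, j} : Finset (Fin n)).orderIsoOfFin h2 m : Fin n) = ![i, j] m := by
  have hmem : ∀ x : Fin 2, ![i, j] x ∈ ({i, j} : Finset (Fin n)) := by
    intro x; fin_cases x <;> simp
  have hmono : StrictMono ![i, j] := by
    intro a b hab
    fin_cases a <;> fin_cases b <;> first
      | exact absurd hab (by decide)
      | simpa using hij
  have hu := Finset.orderEmbOfFin_unique h2 hmem hmono
  intro m
  rw [Finset.coe_orderIsoOfFin_apply, ← hu]

lemma ofCurv_sorted {i j k l : Fin n} (hij : i < j) (hkl : k < l) :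
    ofCurv e R {i, j} {k, l} = R (e i) (e j) (e k) (e l) := by
  unfold ofCurv ofForm
  have hS : ({i, j} : Finset (Fin n)).card = 2 := Finset.card_pair (ne_of_lt hij)
  have hT : ({k, l} : Finset (Fin n)).card = 2 := Finset.card_pair (ne_of_lt hkl)
  rw [dif_pos ⟨hS, hT⟩]
  have eS := pair_orderEmb hij hS
  have eT := pair_orderEmb hkl hT
  show R (e _) (e _) (e _) (e _) = _
  rw [eS 0, eS 1, eT 0, eT 1]
  simp

lemma ofCurv_pair (hR : IsCurv R) {i j k l : Fin n} (hij : i ≠ j) (hkl : k ≠ l) :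
    ofCurv e R {i, j} {k, l} = sg i j * sg k l * R (e i) (e j) (e k) (e l) := by
  have hflip2 : ∀ x y z w : V, R x y z w = - R x y w z := by
    intro x y z w
    rw [hR.pair_symm, hR.antisymm, hR.pair_symm]
  rcases hij.lt_or_gt with h | h <;> rcases hkl.lt_or_gt with h' | h'
  · rw [ofCurv_sorted e R h h', sg_pos h, sg_pos h']; ring
  · rw [Finset.pair_comm k l, ofCurv_sorted e R h h', sg_pos h,
      show sg k l = -1 from if_neg (asymm h'), hflip2 (e i) (e j) (e l) (e k)]
    ring
  · rw [Finset.pair_comm i j, ofCurv_sorted e R h h', sg_pos h',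
      show sg i j = -1 from if_neg (asymm h), hR.antisymm (e j) (e i) (e k) (e l)]
    ring
  · rw [Finset.pair_comm i j, Finset.pair_comm k l, ofCurv_sorted e R h h',
      show sg i j = -1 from if_neg (asymm h), show sg k l = -1 from if_neg (asymm h'),
      hR.antisymm (e j) (e i) (e l) (e k), hflip2 (e i) (e j) (e l) (e k)]
    ring

end

end AvezAux
/-- **Avez's formula.** For an algebraic curvature tensor `R` on an
`n`-dimensional real inner product space with `n ≥ 4`,
`h₄ = c⁴R²/4! = |R|² − |cR|² + (1/4)·(c²R)²`. -/
theorem stmt5_avez_formula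
    (n : ℕ) (hn : 4 ≤ n)
    (V : Type*) [NormedAddCommGroup V] [InnerProductSpace ℝ V]
    (hV : Module.finrank ℝ V = n)
    (e : OrthonormalBasis (Fin n) ℝ V)
    (R : V → V → V → V → ℝ) (hR : IsCurv R) :
    DF.toScalar (DF.contrN 4 (DF.pow (ofCurv e R) 2)) / (Nat.factorial 4 : ℝ) =
      DF.dinner (ofCurv e R) (ofCurv e R)
      - DF.dinner (DF.contrN 1 (ofCurv e R)) (DF.contrN 1 (ofCurv e R))
      + (1 / 4) * (DF.toScalar (DF.contrN 2 (ofCurv e R))) ^ 2 := by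
  classical
  open AvezAux in
  let r : Fin n → Fin n → Fin n → Fin n → ℝ := fun i j k l => R (e i) (e j) (e k) (e l)
  have h1 : ∀ i j k l, r j i k l = - r i j k l := fun i j k l =>
    hR.antisymm (e j) (e i) (e k) (e l)
  have h3 : ∀ i j k l, r k l i j = r i j k l := fun i j k l =>
    hR.pair_symm (e k) (e l) (e i) (e j)
  have hsupp := AvezAux.ofCurv_supp e R
  have hcomp : ∀ {i j k l : Fin n}, i ≠ j → k ≠ l →
      ofCurv e R {i, j} {k, l} = AvezAux.sg i j * AvezAux.sg k l * r i j k l :=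
    fun hij hkl => AvezAux.ofCurv_pair e R hR hij hkl
  have hL : DF.toScalar (DF.contrN 4 (DF.pow (ofCurv e R) 2))
      = 6 * (AvezAux.ScQ r * AvezAux.ScQ r) + 6 * AvezAux.AQ r - 24 * AvezAux.PQ r := by
    rw [show DF.pow (ofCurv e R) 2 = DF.mul (ofCurv e R) (ofCurv e R) from AvezAux.pow_two _]
    show DF.contrN 4 (DF.mul (ofCurv e R) (ofCurv e R)) ∅ ∅ = _
    rw [AvezAux.contr4_eval (ofCurv e R) r hsupp hcomp h1 h3]
    calc ∑ i, ∑ j, ∑ k, ∑ l, AvezAux.Phi r l k j i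
        = ∑ j, ∑ i, ∑ k, ∑ l, AvezAux.Phi r l k j i := AvezAux.sum_comm_12 _
      _ = ∑ j, ∑ i, ∑ l, ∑ k, AvezAux.Phi r l k j i := AvezAux.sum_comm_34 _
      _ = ∑ j, ∑ l, ∑ i, ∑ k, AvezAux.Phi r l k j i := AvezAux.sum_comm_23 _
      _ = ∑ l, ∑ j, ∑ i, ∑ k, AvezAux.Phi r l k j i := AvezAux.sum_comm_12 _
      _ = ∑ l, ∑ j, ∑ k, ∑ i, AvezAux.Phi r l k j i := AvezAux.sum_comm_34 _
      _ = ∑ l, ∑ k, ∑ j, ∑ i, AvezAux.Phi r l k j i := AvezAux.sum_comm_23 _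
      _ = 6 * (AvezAux.ScQ r * AvezAux.ScQ r) + 6 * AvezAux.AQ r - 24 * AvezAux.PQ r :=
          AvezAux.sumPhi r h1 h3
  have hA : AvezAux.AQ r = 4 * DF.dinner (ofCurv e R) (ofCurv e R) :=
    AvezAux.dinner_eval (ofCurv e R) r hsupp hcomp h1 h3
  have hP : DF.dinner (DF.contrN 1 (ofCurv e R)) (DF.contrN 1 (ofCurv e R)) = AvezAux.PQ r :=
    AvezAux.dinner_c_eval (ofCurv e R) r hsupp hcomp h1 h3
  have hSc : DF.toScalar (DF.contrN 2 (ofCurv e R)) = AvezAux.ScQ r :=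
    AvezAux.scal_eval (ofCurv e R) r hsupp hcomp h1 h3
  rw [hL, hP, hSc, hA]
  norm_num [Nat.factorial]
  ring
end

section
/- Let R be an algebraic curvature tensor on an n-dimensional real inner product space (V,g) and k ≥ 1 an integer with 2k+2 ≤ n. If R is (2k−2,k)-Einstein, i.e. c^{2k−2}R^k = λ·g² for some real λ, then h_{2k+2} = ( 2k(2k−1)/(n(n−1)) + (n−4k)/n )·h_{2k}·h_2. -/
/-!
Double forms on an `n`-dimensional real inner product space `(V, g)`, represented
by their components with respect to a (fixed) orthonormal basis: a `(p,q)`-double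
form is determined by its values on pairs of increasingly ordered tuples of
distinct basis vectors, i.e. by a function `Finset (Fin n) → Finset (Fin n) → ℝ`
(supported on pairs of sets of cardinalities `p` and `q`).
-/

open Finset

section Aux
open Finset
namespace DF
variable {n : ℕ}

local notation "s" => shuffleSign

lemma s_mul_self (A B : Finset (Fin n)) : shuffleSign A B * shuffleSign A B = 1 := by
  unfold shuffleSign
  rw [← pow_add]
  exact Even.neg_one_pow ⟨_, rfl⟩

lemma s_sq (A B : Finset (Fin n)) : shuffleSign A B ^ 2 = 1 := by
  rw [sq]; exact s_mul_self A B

lemma s_ne_zero (A B : Finset (Fin n)) : shuffleSign A B ≠ 0 := by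
  intro h
  have := s_mul_self A B
  rw [h, mul_zero] at this
  norm_num at this

lemma s_empty_left (B : Finset (Fin n)) : shuffleSign (∅ : Finset (Fin n)) B = 1 := by
  unfold shuffleSign; simp

lemma s_empty_right (A : Finset (Fin n)) : shuffleSign A (∅ : Finset (Fin n)) = 1 := by
  unfold shuffleSign; simp

lemma s_union_left {A B : Finset (Fin n)} (C : Finset (Fin n)) (h : Disjoint A B) :
    shuffleSign (A ∪ B) C = shuffleSign A C * shuffleSign B C := by
  unfold shuffleSign
  rw [← pow_add, Finset.sum_union h]

lemma s_union_right (A : Finset (Fin n)) {B C : Finset (Fin n)} (h : Disjoint B C) :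
    shuffleSign A (B ∪ C) = shuffleSign A B * shuffleSign A C := by
  unfold shuffleSign
  rw [← pow_add, ← Finset.sum_add_distrib]
  congr 1
  refine Finset.sum_congr rfl fun a _ => ?_
  rw [Finset.filter_union, Finset.card_union_of_disjoint]
  exact Finset.disjoint_filter_filter h

lemma s_comm {A B : Finset (Fin n)} (h : Disjoint A B) :
    shuffleSign A B * shuffleSign B A = (-1 : ℝ) ^ (A.card * B.card) := by
  unfold shuffleSign
  rw [← pow_add]
  congr 1
  have h1 : ∀ (X Y : Finset (Fin n)), (∑ a ∈ X, (Y.filter fun b => b < a).card)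
      = ∑ a ∈ X, ∑ b ∈ Y, if b < a then 1 else 0 := by
    intro X Y; exact Finset.sum_congr rfl fun a _ => Finset.card_filter _ _
  rw [h1, h1]
  rw [show (∑ a ∈ B, ∑ b ∈ A, if b < a then 1 else 0) = ∑ b ∈ A, ∑ a ∈ B, if b < a then 1 else 0
    from Finset.sum_comm]
  rw [← Finset.sum_add_distrib]
  have : ∀ a ∈ A, ((∑ b ∈ B, if b < a then 1 else 0) + ∑ b ∈ B, if b > a then 1 else 0) = B.card := by
    intro a ha
    rw [← Finset.sum_add_distrib]
    rw [Finset.card_eq_sum_ones B]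
    refine Finset.sum_congr rfl fun b hb => ?_
    have hab : a ≠ b := by
      intro rfl'
      exact (Finset.disjoint_left.mp h ha) (rfl' ▸ hb)
    rcases lt_or_gt_of_ne hab with h' | h'
    · simp [h', not_lt_of_gt h']
    · simp [h', not_lt_of_gt h']
  rw [Finset.sum_congr rfl this, Finset.sum_const, smul_eq_mul]

end DF
end Aux
section Aux2
open Finset
namespace DF
variable {n : ℕ}

open scoped Classical

/-- Reindex a sum over sets disjoint from `S` as a sum over supersets of `S`. -/
lemma sum_union_reindex (S : Finset (Fin n)) (g : Finset (Fin n) → ℝ) :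
    (∑ E : Finset (Fin n), if Disjoint E S then g (E ∪ S) else 0)
      = ∑ A : Finset (Fin n), if S ⊆ A then g A else 0 := by
  rw [← Finset.sum_filter, ← Finset.sum_filter]
  refine Finset.sum_nbij' (fun E => E ∪ S) (fun A => A \ S) ?_ ?_ ?_ ?_ ?_
  · intro E hE
    simp only [Finset.mem_filter, Finset.mem_univ, true_and] at hE ⊢
    exact Finset.subset_union_right
  · intro A hA
    simp only [Finset.mem_filter, Finset.mem_univ, true_and] at hA ⊢
    exact Finset.sdiff_disjoint
  · intro E hE
    simp only [Finset.mem_filter, Finset.mem_univ, true_and] at hE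
    exact Finset.union_sdiff_cancel_right hE
  · intro A hA
    simp only [Finset.mem_filter, Finset.mem_univ, true_and] at hA
    exact Finset.sdiff_union_of_subset hA
  · intro E _; rfl

/-- Reindex a sum over sets containing `x` as a sum over sets not containing `x`. -/
lemma sum_mem_reindex (x : Fin n) (g : Finset (Fin n) → ℝ) :
    (∑ E : Finset (Fin n), if x ∈ E then g E else 0)
      = ∑ E : Finset (Fin n), if x ∉ E then g (insert x E) else 0 := by
  rw [← Finset.sum_filter, ← Finset.sum_filter]
  refine Finset.sum_nbij' (fun E => E.erase x) (fun E => insert x E) ?_ ?_ ?_ ?_ ?_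
  · intro E hE; simp
  · intro E hE; simp only [Finset.mem_filter, Finset.mem_univ, true_and] at hE ⊢
    simp [hE]
  · intro E hE; simp only [Finset.mem_filter, Finset.mem_univ, true_and] at hE
    exact Finset.insert_erase hE
  · intro E hE; simp only [Finset.mem_filter, Finset.mem_univ, true_and] at hE
    exact Finset.erase_insert hE
  · intro E hE
    simp only [Finset.mem_filter, Finset.mem_univ, true_and] at hE
    rw [Finset.insert_erase hE]

/-- The normalized `r`-fold contraction, as a sum over contraction sets. -/
def F (m : ℕ) (ω : DF n) : DF n := fun S T =>
  ∑ E : Finset (Fin n),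
    if E.card = m ∧ Disjoint E (S ∪ T) then
      shuffleSign E S * shuffleSign E T * ω (E ∪ S) (E ∪ T) else 0

lemma contrN_eq_F (m : ℕ) (ω : DF n) (S T : Finset (Fin n)) :
    contrN m ω S T = (m.factorial : ℝ) * F m ω S T := by
  induction m generalizing S T with
  | zero =>
    simp only [contrN, Function.iterate_zero, id_eq, Nat.factorial_zero, Nat.cast_one, one_mul]
    unfold F
    rw [Finset.sum_eq_single (∅ : Finset (Fin n))]
    · simp [s_empty_left]
    · intro E _ hE
      rw [if_neg]
      rintro ⟨h1, -⟩
      exact hE (Finset.card_eq_zero.mp h1)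
    · simp
  | succ m ih =>
    have hstep : contrN (m + 1) ω S T = contr (contrN m ω) S T := by
      unfold contrN
      rw [Function.iterate_succ_apply']
    set g : Finset (Fin n) → ℝ := fun E' =>
      if E'.card = m + 1 ∧ Disjoint E' (S ∪ T) then
        shuffleSign E' S * shuffleSign E' T * ω (E' ∪ S) (E' ∪ T) else 0 with hg
    have key : ∀ i : Fin n,
        (if i ∈ S ∨ i ∈ T then 0
          else shuffleSign {i} S * shuffleSign {i} T * contrN m ω (insert i S) (insert i T))
        = (m.factorial : ℝ) * ∑ E : Finset (Fin n), if i ∉ E then g (insert i E) else 0 := by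
      intro i
      by_cases hi : i ∈ S ∨ i ∈ T
      · rw [if_pos hi]
        rw [Finset.sum_eq_zero, mul_zero]
        intro E _
        by_cases hiE : i ∉ E
        · rw [if_pos hiE, hg]
          dsimp only
          rw [if_neg]
          rintro ⟨-, hd⟩
          exact Finset.disjoint_left.mp hd (Finset.mem_insert_self i E)
            (Finset.mem_union.mpr hi)
        · rw [if_neg hiE]
      · push_neg at hi
        obtain ⟨hiS, hiT⟩ := hi
        rw [if_neg (by tauto), ih, F]
        simp only [Finset.mul_sum]
        refine Finset.sum_congr rfl fun E _ => ?_
        by_cases hiE : i ∉ E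
        · rw [if_pos hiE, hg]
          dsimp only
          have hcard : (insert i E).card = E.card + 1 := Finset.card_insert_of_notMem hiE
          have hguard : (E.card = m ∧ Disjoint E (insert i S ∪ insert i T))
              ↔ ((insert i E).card = m + 1 ∧ Disjoint (insert i E) (S ∪ T)) := by
            simp only [Finset.disjoint_left, Finset.mem_union, Finset.mem_insert, hcard]
            constructor <;> rintro ⟨h1, h2⟩ <;>
              refine ⟨by omega, fun a ha hb => ?_⟩ <;> specialize @h2 a <;>
              rcases eq_or_ne a i with rfl | hne <;> tauto
          by_cases hc : E.card = m ∧ Disjoint E (insert i S ∪ insert i T)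
          · rw [if_pos hc, if_pos (hguard.mp hc)]
            have hdisjE : Disjoint (insert i E) (S ∪ T) := (hguard.mp hc).2
            have hES : E ∪ insert i S = insert i E ∪ S := by
              ext a; simp only [Finset.mem_union, Finset.mem_insert]; tauto
            have hET : E ∪ insert i T = insert i E ∪ T := by
              ext a; simp only [Finset.mem_union, Finset.mem_insert]; tauto
            rw [hES, hET]
            have e1 : shuffleSign E (insert i S) = shuffleSign E {i} * shuffleSign E S := by
              rw [Finset.insert_eq, s_union_right _ (by simp [Finset.disjoint_left, hiS])]
            have e2 : shuffleSign E (insert i T) = shuffleSign E {i} * shuffleSign E T := by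
              rw [Finset.insert_eq, s_union_right _ (by simp [Finset.disjoint_left, hiT])]
            have e3 : shuffleSign (insert i E) S = shuffleSign {i} S * shuffleSign E S := by
              rw [Finset.insert_eq, s_union_left _ (by simp [Finset.disjoint_left, hiE])]
            have e4 : shuffleSign (insert i E) T = shuffleSign {i} T * shuffleSign E T := by
              rw [Finset.insert_eq, s_union_left _ (by simp [Finset.disjoint_left, hiE])]
            rw [e1, e2, e3, e4]
            have hsq := s_mul_self E {i}
            set w := ω (insert i E ∪ S) (insert i E ∪ T)
            ring_nf
            linear_combination (shuffleSign {i} S * shuffleSign {i} T * shuffleSign E S *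
              shuffleSign E T * w * (m.factorial : ℝ)) * hsq
          · rw [if_neg hc, if_neg (fun h => hc (hguard.mpr h))]
            ring
        · have hiE0 := hiE
          push_neg at hiE
          have hLHS : ¬ (E.card = m ∧ Disjoint E (insert i S ∪ insert i T)) := by
            rintro ⟨-, hd⟩
            exact Finset.disjoint_left.mp hd hiE
              (Finset.mem_union_left _ (Finset.mem_insert_self i S))
          rw [if_neg hLHS, if_neg hiE0]
          ring
    have const : ∀ E : Finset (Fin n),
        (E.card : ℝ) * (if E.card = m + 1 ∧ Disjoint E (S ∪ T) then
            shuffleSign E S * shuffleSign E T * ω (E ∪ S) (E ∪ T) else 0)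
        = ((m:ℝ) + 1) * (if E.card = m + 1 ∧ Disjoint E (S ∪ T) then
            shuffleSign E S * shuffleSign E T * ω (E ∪ S) (E ∪ T) else 0) := by
      intro E
      by_cases hE : E.card = m + 1 ∧ Disjoint E (S ∪ T)
      · rw [if_pos hE, hE.1]; push_cast; ring
      · rw [if_neg hE]; ring
    rw [hstep]
    unfold contr
    rw [Finset.sum_congr rfl fun i _ => key i, ← Finset.mul_sum]
    have swap : (∑ i : Fin n, ∑ E : Finset (Fin n), if i ∉ E then g (insert i E) else 0)
        = ∑ E : Finset (Fin n), (E.card : ℝ) * (if E.card = m + 1 ∧ Disjoint E (S ∪ T) then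
            shuffleSign E S * shuffleSign E T * ω (E ∪ S) (E ∪ T) else 0) := by
      have step1 : ∀ i : Fin n,
          (∑ E : Finset (Fin n), if i ∉ E then g (insert i E) else 0)
            = ∑ E : Finset (Fin n), if i ∈ E then g E else 0 :=
        fun i => (sum_mem_reindex i g).symm
      rw [Finset.sum_congr rfl fun i _ => step1 i]
      rw [Finset.sum_comm]
      refine Finset.sum_congr rfl fun E _ => ?_
      rw [Finset.sum_ite_mem, Finset.univ_inter, Finset.sum_const, nsmul_eq_mul]
    rw [swap, Finset.sum_congr rfl fun E _ => const E, ← Finset.mul_sum]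
    show _ = ((m+1).factorial : ℝ) * F (m+1) ω S T
    simp only [F, Nat.factorial_succ]
    push_cast
    ring

end DF
end Aux2
section Aux3
open Finset
namespace DF
variable {n : ℕ}

lemma isDeg_one : IsDeg 0 (one n) := by
  intro S T h
  unfold one at h
  by_cases hc : S = ∅ ∧ T = ∅
  · simp [hc.1, hc.2]
  · rw [if_neg hc] at h; exact absurd rfl h

lemma isDeg_mul {p q : ℕ} {ω θ : DF n} (hω : IsDeg p ω) (hθ : IsDeg q θ) :
    IsDeg (p + q) (mul ω θ) := by
  intro S T h
  unfold mul at h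
  obtain ⟨A, hA, h⟩ := Finset.exists_ne_zero_of_sum_ne_zero h
  obtain ⟨C, hC, h⟩ := Finset.exists_ne_zero_of_sum_ne_zero h
  have hω' : ω A C ≠ 0 := fun h0 => h (by rw [h0]; ring)
  have hθ' : θ (S \ A) (T \ C) ≠ 0 := fun h0 => h (by rw [h0]; ring)
  have h1 := hω _ _ hω'
  have h2 := hθ _ _ hθ'
  have hAS : A ⊆ S := Finset.mem_powerset.mp hA
  have hCT : C ⊆ T := Finset.mem_powerset.mp hC
  have e1 : (S \ A).card = S.card - A.card := Finset.card_sdiff_of_subset hAS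
  have e2 : (T \ C).card = T.card - C.card := Finset.card_sdiff_of_subset hCT
  have l1 : A.card ≤ S.card := Finset.card_le_card hAS
  have l2 : C.card ≤ T.card := Finset.card_le_card hCT
  omega

lemma isDeg_pow {ω : DF n} (h : IsDeg 2 ω) (k : ℕ) : IsDeg (2 * k) (pow ω k) := by
  induction k with
  | zero => simpa [pow] using isDeg_one
  | succ k ih =>
    have := isDeg_mul ih h
    have e : 2 * k + 2 = 2 * (k + 1) := by ring
    rw [e] at this
    exact this

lemma mul_one_left (θ : DF n) (S T : Finset (Fin n)) : mul (one n) θ S T = θ S T := by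
  unfold mul
  rw [Finset.sum_eq_single (∅ : Finset (Fin n))]
  · rw [Finset.sum_eq_single (∅ : Finset (Fin n))]
    · simp [one, s_empty_left]
    · intro C _ hC
      have : one n ∅ C = 0 := by
        unfold one; rw [if_neg]; tauto
      rw [this]; ring
    · intro h; exact absurd (Finset.empty_mem_powerset T) h
  · intro A _ hA
    refine Finset.sum_eq_zero fun C _ => ?_
    have : one n A C = 0 := by
      unfold one; rw [if_neg]; tauto
    rw [this]; ring
  · intro h; exact absurd (Finset.empty_mem_powerset S) h

lemma gm2_apply (S T : Finset (Fin n)) :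
    pow (gm n) 2 S T = if S = T ∧ S.card = 2 then 2 else 0 := by
  have e2 : mul (one n) (gm n) = gm n :=
    funext fun S => funext fun T => mul_one_left (gm n) S T
  have e1 : pow (gm n) 2 = mul (gm n) (gm n) := by
    show mul (mul (one n) (gm n)) (gm n) = _
    rw [e2]
  rw [e1]
  unfold mul
  by_cases hc : S = T ∧ S.card = 2
  · obtain ⟨rfl, hS2⟩ := hc
    rw [if_pos ⟨rfl, hS2⟩]
    have inner : ∀ A ∈ S.powerset,
        (∑ C ∈ S.powerset, shuffleSign A (S \ A) * shuffleSign C (S \ C) *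
          gm n A C * gm n (S \ A) (S \ C))
        = if A.card = 1 then 1 else 0 := by
      intro A hA
      have hAS : A ⊆ S := Finset.mem_powerset.mp hA
      rw [Finset.sum_eq_single A]
      · unfold gm
        by_cases h1 : A.card = 1
        · rw [if_pos ⟨rfl, h1⟩, if_pos ⟨rfl, by
            rw [Finset.card_sdiff_of_subset hAS, hS2, h1]⟩, if_pos h1]
          have := s_mul_self A (S \ A)
          linear_combination this
        · rw [if_neg (show ¬(A = A ∧ A.card = 1) by tauto), if_neg h1]
          ring
      · intro C _ hCA
        have : gm n A C = 0 := by
          unfold gm; rw [if_neg]; rintro ⟨rfl, -⟩; exact hCA rfl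
        rw [this]; ring
      · intro h; exact absurd hA h
    rw [Finset.sum_congr rfl inner]
    rw [Finset.sum_ite, Finset.sum_const_zero, add_zero, Finset.sum_const]
    rw [← Finset.powersetCard_eq_filter, Finset.card_powersetCard, hS2]
    norm_num
  · rw [if_neg hc]
    refine Finset.sum_eq_zero fun A hA => Finset.sum_eq_zero fun C hC => ?_
    by_contra h
    have hg1 : gm n A C ≠ 0 := fun h0 => h (by rw [h0]; ring)
    have hg2 : gm n (S \ A) (T \ C) ≠ 0 := fun h0 => h (by rw [h0]; ring)
    unfold gm at hg1 hg2
    have hAC : A = C ∧ A.card = 1 := by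
      by_contra hcon; rw [if_neg hcon] at hg1; exact hg1 rfl
    have hST : S \ A = T \ C ∧ (S \ A).card = 1 := by
      by_contra hcon; rw [if_neg hcon] at hg2; exact hg2 rfl
    have hAS : A ⊆ S := Finset.mem_powerset.mp hA
    have hCT : C ⊆ T := Finset.mem_powerset.mp hC
    have hSeq : S = T := by
      have := Finset.union_sdiff_of_subset hAS
      have h2 := Finset.union_sdiff_of_subset hCT
      rw [← this, ← h2, hST.1, hAC.1]
    refine hc ⟨hSeq, ?_⟩
    have := Finset.card_sdiff_of_subset hAS
    have hl := Finset.card_le_card hAS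
    omega

end DF

lemma ofCurv_isDeg {n : ℕ} {V : Type*} [NormedAddCommGroup V] [InnerProductSpace ℝ V]
    (e : OrthonormalBasis (Fin n) ℝ V) (R : V → V → V → V → ℝ) :
    DF.IsDeg 2 (ofCurv e R) := by
  intro S T h
  unfold ofCurv ofForm at h
  by_cases hc : S.card = 2 ∧ T.card = 2
  · exact hc
  · rw [dif_neg hc] at h; exact absurd rfl h

end Aux3
section Aux4
open Finset
namespace DF
variable {n : ℕ}

open scoped Classical

/-- Diagonal sum of `P` over `2k`-sets containing `b`. -/
noncomputable def Mb (k : ℕ) (P : DF n) (b : Fin n) : ℝ :=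
  ∑ A : Finset (Fin n), if A.card = 2*k ∧ b ∈ A then P A A else 0

/-- Diagonal sum of `P` over all `2k`-sets. -/
noncomputable def Tot (k : ℕ) (P : DF n) : ℝ :=
  ∑ A : Finset (Fin n), if A.card = 2*k then P A A else 0

/-- Diagonal sum of `P` over `2k`-sets disjoint from `B`. -/
noncomputable def N0 (k : ℕ) (P : DF n) (B : Finset (Fin n)) : ℝ :=
  ∑ A : Finset (Fin n), if A.card = 2*k ∧ Disjoint A B then P A A else 0

/-- The `(2,2)`-coefficient sums appearing in the expansion of `c^{2k+2}(P·R)`. -/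
noncomputable def Qd (k : ℕ) (P : DF n) (B D : Finset (Fin n)) : ℝ :=
  ∑ U : Finset (Fin n), if U.card = 2*k+2 ∧ B ⊆ U ∧ D ⊆ U then
    shuffleSign (U \ B) B * shuffleSign (U \ D) D * P (U \ B) (U \ D) else 0

variable {k : ℕ} {P : DF n} {μ : ℝ}

lemma keyF (hk : 1 ≤ k) (P : DF n) (S : Finset (Fin n)) (hS : S.card = 2) :
    F (2*k-2) P S S = ∑ A : Finset (Fin n), if A.card = 2*k ∧ S ⊆ A then P A A else 0 := by
  unfold F
  rw [Finset.union_self S]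
  have step : ∀ E : Finset (Fin n),
      (if E.card = 2*k-2 ∧ Disjoint E S then
        shuffleSign E S * shuffleSign E S * P (E ∪ S) (E ∪ S) else 0)
      = (if Disjoint E S then
          (fun A => if A.card = 2*k then P A A else 0) (E ∪ S) else 0) := by
    intro E
    by_cases hd : Disjoint E S
    · rw [if_pos hd]
      dsimp only
      have hcard : (E ∪ S).card = E.card + 2 := by
        rw [Finset.card_union_of_disjoint hd, hS]
      by_cases hE : E.card = 2*k-2
      · rw [if_pos ⟨hE, hd⟩, if_pos (by omega), s_mul_self, one_mul]
      · rw [if_neg (by tauto), if_neg (by omega)]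
    · rw [if_neg hd, if_neg (by tauto)]
  rw [Finset.sum_congr rfl fun E _ => step E,
    sum_union_reindex S (fun A => if A.card = 2*k then P A A else 0)]
  refine Finset.sum_congr rfl fun A _ => ?_
  by_cases h1 : S ⊆ A <;> by_cases h2 : A.card = 2*k <;> simp [h1, h2]

lemma N2_eq (hk : 1 ≤ k)
    (hF : ∀ S T : Finset (Fin n), S.card = 2 → T.card = 2 →
      F (2*k-2) P S T = if S = T then μ else 0)
    (B : Finset (Fin n)) (hB : B.card = 2) :
    (∑ A : Finset (Fin n), if A.card = 2*k ∧ B ⊆ A then P A A else 0) = μ := by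
  rw [← keyF hk P B hB, hF B B hB hB, if_pos rfl]

lemma Mb_eq (hk : 1 ≤ k) (hn : 1 ≤ n)
    (hF : ∀ S T : Finset (Fin n), S.card = 2 → T.card = 2 →
      F (2*k-2) P S T = if S = T then μ else 0)
    (b : Fin n) :
    (2*(k:ℝ) - 1) * Mb k P b = ((n:ℝ) - 1) * μ := by
  have lhs : ∑ x ∈ Finset.univ.erase b, F (2*k-2) P {b, x} {b, x} = ((n:ℝ) - 1) * μ := by
    have : ∀ x ∈ Finset.univ.erase b, F (2*k-2) P {b, x} {b, x} = μ := by
      intro x hx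
      have hxb : x ≠ b := Finset.ne_of_mem_erase hx
      have hc : ({b, x} : Finset (Fin n)).card = 2 := Finset.card_pair (Ne.symm hxb)
      rw [hF _ _ hc hc, if_pos rfl]
    rw [Finset.sum_congr rfl this, Finset.sum_const, Finset.card_erase_of_mem (Finset.mem_univ b),
      Finset.card_univ, Fintype.card_fin, nsmul_eq_mul]
    have : ((n - 1 : ℕ) : ℝ) = (n:ℝ) - 1 := by
      push_cast [hn]; ring
    rw [this]
  rw [← lhs]
  have rhs : ∀ x ∈ Finset.univ.erase b, F (2*k-2) P {b, x} {b, x}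
      = ∑ A : Finset (Fin n), if A.card = 2*k ∧ b ∈ A ∧ x ∈ A then P A A else 0 := by
    intro x hx
    have hxb : x ≠ b := Finset.ne_of_mem_erase hx
    rw [keyF hk P _ (Finset.card_pair (Ne.symm hxb))]
    refine Finset.sum_congr rfl fun A _ => ?_
    have : ({b, x} : Finset (Fin n)) ⊆ A ↔ b ∈ A ∧ x ∈ A := by
      rw [Finset.insert_subset_iff, Finset.singleton_subset_iff]
    by_cases h1 : A.card = 2*k <;> by_cases h2 : b ∈ A <;> by_cases h3 : x ∈ A <;>
      simp [h1, h2, h3, this]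
  rw [Finset.sum_congr rfl rhs, Finset.sum_comm]
  have inner : ∀ A : Finset (Fin n),
      (∑ x ∈ Finset.univ.erase b, if A.card = 2*k ∧ b ∈ A ∧ x ∈ A then P A A else 0)
      = (2*(k:ℝ) - 1) * (if A.card = 2*k ∧ b ∈ A then P A A else 0) := by
    intro A
    by_cases hA : A.card = 2*k ∧ b ∈ A
    · rw [if_pos hA]
      have : ∀ x ∈ Finset.univ.erase b,
          (if A.card = 2*k ∧ b ∈ A ∧ x ∈ A then P A A else 0)
          = if x ∈ A.erase b then P A A else 0 := by
        intro x hx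
        have hxb : x ≠ b := Finset.ne_of_mem_erase hx
        by_cases h3 : x ∈ A
        · rw [if_pos ⟨hA.1, hA.2, h3⟩, if_pos (Finset.mem_erase.mpr ⟨hxb, h3⟩)]
        · rw [if_neg (by tauto), if_neg (fun hc => h3 (Finset.mem_of_mem_erase hc))]
      rw [Finset.sum_congr rfl this]
      rw [Finset.sum_ite_mem]
      have hsub : Finset.univ.erase b ∩ A.erase b = A.erase b := by
        refine Finset.inter_eq_right.mpr fun a ha => ?_
        exact Finset.mem_erase.mpr ⟨(Finset.mem_erase.mp ha).1, Finset.mem_univ a⟩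
      rw [hsub, Finset.sum_const, Finset.card_erase_of_mem hA.2, hA.1, nsmul_eq_mul]
      have : ((2*k - 1 : ℕ) : ℝ) = 2*(k:ℝ) - 1 := by
        push_cast [show 1 ≤ 2*k by omega]; ring
      rw [this]
    · rw [if_neg hA, mul_zero]
      refine Finset.sum_eq_zero fun x _ => ?_
      rw [if_neg (by tauto)]
  rw [Finset.sum_congr rfl fun A _ => inner A, ← Finset.mul_sum]
  rfl

lemma Tot_eq (hk : 1 ≤ k) (hn : 1 ≤ n)
    (hF : ∀ S T : Finset (Fin n), S.card = 2 → T.card = 2 →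
      F (2*k-2) P S T = if S = T then μ else 0) :
    2*(k:ℝ) * (2*(k:ℝ) - 1) * Tot k P = (n:ℝ) * ((n:ℝ) - 1) * μ := by
  have swap : ∑ b : Fin n, Mb k P b = 2*(k:ℝ) * Tot k P := by
    unfold Mb
    rw [Finset.sum_comm]
    unfold Tot
    rw [Finset.mul_sum]
    refine Finset.sum_congr rfl fun A _ => ?_
    by_cases hA : A.card = 2*k
    · have : ∀ b : Fin n, (if A.card = 2*k ∧ b ∈ A then P A A else 0)
          = if b ∈ A then P A A else 0 := by
        intro b; by_cases hb : b ∈ A <;> simp [hA, hb]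
      rw [Finset.sum_congr rfl fun b _ => this b, Finset.sum_ite_mem, Finset.univ_inter,
        Finset.sum_const, nsmul_eq_mul, if_pos hA, hA]
      push_cast; ring
    · rw [if_neg hA, mul_zero]
      refine Finset.sum_eq_zero fun b _ => ?_
      rw [if_neg (by tauto)]
  have each : ∀ b : Fin n, (2*(k:ℝ) - 1) * Mb k P b = ((n:ℝ) - 1) * μ :=
    Mb_eq hk hn hF
  have hsum : (2*(k:ℝ) - 1) * ∑ b : Fin n, Mb k P b = (n:ℝ) * (((n:ℝ) - 1) * μ) := by
    rw [Finset.mul_sum, Finset.sum_congr rfl fun b _ => each b, Finset.sum_const,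
      Finset.card_univ, Fintype.card_fin, nsmul_eq_mul]
  rw [swap] at hsum
  linarith [hsum]

end DF
end Aux4
section Aux5
open Finset
namespace DF
variable {n : ℕ} {k : ℕ} {P : DF n} {μ : ℝ}

open scoped Classical

lemma Qd_diag (B : Finset (Fin n)) (hB : B.card = 2) :
    Qd k P B B = N0 k P B := by
  unfold Qd
  set g : Finset (Fin n) → ℝ := fun U =>
    if U.card = 2*k+2 then P (U \ B) (U \ B) else 0 with hg
  have step : ∀ U : Finset (Fin n),
      (if U.card = 2*k+2 ∧ B ⊆ U ∧ B ⊆ U then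
        shuffleSign (U \ B) B * shuffleSign (U \ B) B * P (U \ B) (U \ B) else 0)
      = if B ⊆ U then g U else 0 := by
    intro U
    by_cases hs : B ⊆ U
    · rw [if_pos hs, hg]
      dsimp only
      by_cases hc : U.card = 2*k+2
      · rw [if_pos ⟨hc, hs, hs⟩, if_pos hc, s_mul_self, one_mul]
      · rw [if_neg (by tauto), if_neg hc]
    · rw [if_neg (by tauto), if_neg hs]
  rw [Finset.sum_congr rfl fun U _ => step U, ← sum_union_reindex B g]
  unfold N0
  refine Finset.sum_congr rfl fun E _ => ?_
  by_cases hd : Disjoint E B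
  · rw [if_pos hd, hg]
    dsimp only
    have hcard : (E ∪ B).card = E.card + 2 := by
      rw [Finset.card_union_of_disjoint hd, hB]
    have hEB : (E ∪ B) \ B = E := Finset.union_sdiff_cancel_right hd
    by_cases hc : E.card = 2*k
    · rw [if_pos (by omega), hEB, if_pos ⟨hc, hd⟩]
    · rw [if_neg (by omega), if_neg (by tauto)]
  · rw [if_neg hd, if_neg (by tauto)]

lemma N0_eq (hk : 1 ≤ k)
    (hF : ∀ S T : Finset (Fin n), S.card = 2 → T.card = 2 →
      F (2*k-2) P S T = if S = T then μ else 0)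
    (b1 b2 : Fin n) (hne : b1 ≠ b2) :
    N0 k P {b1, b2} = Tot k P - Mb k P b1 - Mb k P b2 + μ := by
  have hB2 : ({b1, b2} : Finset (Fin n)).card = 2 := Finset.card_pair hne
  have hN2 := N2_eq hk hF {b1, b2} hB2
  rw [← hN2]
  unfold N0 Tot Mb
  have key : (∑ A : Finset (Fin n), if A.card = 2*k ∧ Disjoint A {b1, b2} then P A A else 0)
      + (∑ A : Finset (Fin n), if A.card = 2*k ∧ b1 ∈ A then P A A else 0)
      + (∑ A : Finset (Fin n), if A.card = 2*k ∧ b2 ∈ A then P A A else 0)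
      = (∑ A : Finset (Fin n), if A.card = 2*k then P A A else 0)
      + (∑ A : Finset (Fin n), if A.card = 2*k ∧ {b1, b2} ⊆ A then P A A else 0) := by
    rw [← Finset.sum_add_distrib, ← Finset.sum_add_distrib, ← Finset.sum_add_distrib]
    refine Finset.sum_congr rfl fun A _ => ?_
    by_cases h1 : A.card = 2*k <;> by_cases hb1 : b1 ∈ A <;> by_cases hb2 : b2 ∈ A <;>
      simp [h1, hb1, hb2, Finset.disjoint_insert_right, Finset.disjoint_singleton_right,
        Finset.insert_subset_iff, Finset.singleton_subset_iff]
  linarith [key]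

lemma Qd_diag_eq (hk : 1 ≤ k) (hn : 4 ≤ n)
    (hF : ∀ S T : Finset (Fin n), S.card = 2 → T.card = 2 →
      F (2*k-2) P S T = if S = T then μ else 0)
    (B : Finset (Fin n)) (hB : B.card = 2) :
    Qd k P B B = μ * ((n:ℝ) - 2*k) * ((n:ℝ) - 2*k - 1) / (2*(k:ℝ) * (2*(k:ℝ) - 1)) := by
  obtain ⟨b1, b2, hne, rfl⟩ := Finset.card_eq_two.mp hB
  rw [Qd_diag _ hB, N0_eq hk hF b1 b2 hne]
  have hn1 : 1 ≤ n := by omega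
  have h1 := Mb_eq (μ := μ) hk hn1 hF b1
  have h2 := Mb_eq (μ := μ) hk hn1 hF b2
  have h3 := Tot_eq (μ := μ) hk hn1 hF
  have hk1 : (1:ℝ) ≤ (k:ℝ) := by exact_mod_cast hk
  have d1 : 2*(k:ℝ) - 1 ≠ 0 := by linarith
  have d2 : 2*(k:ℝ) ≠ 0 := by linarith
  field_simp at h1 h2 h3 ⊢
  nlinarith [h1, h2, h3]

end DF
end Aux5
section Aux6
open Finset
namespace DF
variable {n : ℕ} {k : ℕ} {P : DF n} {μ : ℝ}

open scoped Classical

lemma Qd_offdiag_disj (hk : 1 ≤ k)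
    (hF : ∀ S T : Finset (Fin n), S.card = 2 → T.card = 2 →
      F (2*k-2) P S T = if S = T then μ else 0)
    (B D : Finset (Fin n)) (hB : B.card = 2) (hD : D.card = 2) (hdisj : Disjoint B D) :
    Qd k P B D = 0 := by
  have hBD : B ≠ D := by
    rintro rfl
    have : B = ∅ := (Finset.disjoint_self_iff_empty B).mp hdisj
    rw [this] at hB
    simp at hB
  have hDB : D ≠ B := Ne.symm hBD
  have hQF : Qd k P B D = F (2*k-2) P D B := by
    unfold Qd F
    set g : Finset (Fin n) → ℝ := fun U =>
      if U.card = 2*k+2 then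
        shuffleSign (U \ B) B * shuffleSign (U \ D) D * P (U \ B) (U \ D) else 0 with hg
    have step : ∀ U : Finset (Fin n),
        (if U.card = 2*k+2 ∧ B ⊆ U ∧ D ⊆ U then
          shuffleSign (U \ B) B * shuffleSign (U \ D) D * P (U \ B) (U \ D) else 0)
        = if B ∪ D ⊆ U then g U else 0 := by
      intro U
      by_cases hs : B ∪ D ⊆ U
      · rw [if_pos hs, hg]
        dsimp only
        rw [Finset.union_subset_iff] at hs
        by_cases hc : U.card = 2*k+2
        · rw [if_pos ⟨hc, hs.1, hs.2⟩, if_pos hc]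
        · rw [if_neg (by tauto), if_neg hc]
      · rw [Finset.union_subset_iff] at hs
        rw [if_neg (by tauto), if_neg (by rw [Finset.union_subset_iff]; tauto)]
    rw [Finset.sum_congr rfl fun U _ => step U, ← sum_union_reindex (B ∪ D) g]
    refine Finset.sum_congr rfl fun E _ => ?_
    by_cases hd : Disjoint E (D ∪ B)
    · have hd' : Disjoint E (B ∪ D) := by rwa [Finset.union_comm]
      rw [if_pos hd', hg]
      dsimp only
      have hEB : Disjoint E B := (Finset.disjoint_union_right.mp hd').1
      have hED : Disjoint E D := (Finset.disjoint_union_right.mp hd').2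
      have hcard : (E ∪ (B ∪ D)).card = E.card + 4 := by
        rw [Finset.card_union_of_disjoint hd', Finset.card_union_of_disjoint hdisj, hB, hD]
      have hUB : (E ∪ (B ∪ D)) \ B = E ∪ D := by
        ext a
        simp only [Finset.mem_sdiff, Finset.mem_union]
        have e1 : a ∈ E → a ∉ B := fun h => Finset.disjoint_left.mp hEB h
        have e2 : a ∈ D → a ∉ B := fun h => Finset.disjoint_left.mp hdisj.symm h
        tauto
      have hUD : (E ∪ (B ∪ D)) \ D = E ∪ B := by
        ext a
        simp only [Finset.mem_sdiff, Finset.mem_union]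
        have e1 : a ∈ E → a ∉ D := fun h => Finset.disjoint_left.mp hED h
        have e2 : a ∈ B → a ∉ D := fun h => Finset.disjoint_left.mp hdisj h
        tauto
      by_cases hc : E.card = 2*k-2
      · rw [if_pos (by omega), if_pos ⟨hc, hd⟩, hUB, hUD]
        have c1 : shuffleSign (E ∪ D) B = shuffleSign E B * shuffleSign D B :=
          s_union_left B hED
        have c2 : shuffleSign (E ∪ B) D = shuffleSign E D * shuffleSign B D :=
          s_union_left D hEB
        have c3 : shuffleSign D B * shuffleSign B D = 1 := by
          rw [mul_comm, s_comm hdisj, hB, hD]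
          norm_num
        rw [c1, c2]
        linear_combination (shuffleSign E B * shuffleSign E D *
          P (E ∪ D) (E ∪ B)) * c3
      · rw [if_neg (by omega), if_neg (by tauto)]
    · have hd' : ¬ Disjoint E (B ∪ D) := by rwa [Finset.union_comm]
      rw [if_neg hd', if_neg (by tauto)]
  rw [hQF, hF D B hD hB, if_neg hDB]

end DF
end Aux6
section Aux7
open Finset
namespace DF
variable {n : ℕ} {k : ℕ} {P : DF n} {μ : ℝ}

open scoped Classical
set_option maxHeartbeats 2000000

lemma Qd_offdiag_inter (hk : 1 ≤ k)
    (hF : ∀ S T : Finset (Fin n), S.card = 2 → T.card = 2 →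
      F (2*k-2) P S T = if S = T then μ else 0)
    (b' d' x0 : Fin n) (hbd : b' ≠ d') (hbx : b' ≠ x0) (hdx : d' ≠ x0) :
    Qd k P {b', x0} {d', x0} = 0 := by
  set B : Finset (Fin n) := {b', x0} with hBdef
  set D : Finset (Fin n) := {d', x0} with hDdef
  set W : Finset (Fin n) := {b', d', x0} with hWdef
  have hxW : ∀ x : Fin n, x ∉ W ↔ (x ≠ b' ∧ x ≠ d' ∧ x ≠ x0) := by
    intro x; rw [hWdef]; simp only [Finset.mem_insert, Finset.mem_singleton]; tauto
  have hWcard : W.card = 3 := by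
    rw [hWdef]
    rw [Finset.card_insert_of_notMem (by simp [hbd, hbx]),
      Finset.card_insert_of_notMem (by simp [hdx]), Finset.card_singleton]
  set c : Fin n → ℝ := fun x =>
    -(shuffleSign {x} {b'} * shuffleSign {x} {d'} *
      shuffleSign {d'} {x0} * shuffleSign {b'} {x0}) with hcdef
  set G : Fin n → Finset (Fin n) → ℝ := fun x E =>
    c x * (shuffleSign E {d', x} * shuffleSign E {b', x} *
      P (E ∪ {d', x}) (E ∪ {b', x})) with hGdef
  set T1a : ℝ := ∑ x : Fin n, ∑ E : Finset (Fin n),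
    if x ∉ W ∧ x0 ∉ E ∧ E.card = 2*k-2 ∧ Disjoint E ({d', x} ∪ {b', x}) then G x E else 0
    with hT1a
  set T1b : ℝ := ∑ x : Fin n, ∑ E : Finset (Fin n),
    if x ∉ W ∧ x0 ∈ E ∧ E.card = 2*k-2 ∧ Disjoint E ({d', x} ∪ {b', x}) then G x E else 0
    with hT1b
  -- each F appearing is zero
  have hFx : ∀ x : Fin n, x ∉ W → F (2*k-2) P {d', x} {b', x} = 0 := by
    intro x hx
    rw [hxW] at hx
    have hcd : ({d', x} : Finset (Fin n)).card = 2 := Finset.card_pair (Ne.symm hx.2.1)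
    have hcb : ({b', x} : Finset (Fin n)).card = 2 := Finset.card_pair (Ne.symm hx.1)
    rw [hF _ _ hcd hcb, if_neg]
    intro h
    have : d' ∈ ({b', x} : Finset (Fin n)) := by rw [← h]; simp
    simp only [Finset.mem_insert, Finset.mem_singleton] at this
    rcases this with h' | h'
    · exact hbd h'.symm
    · exact hx.2.1 h'.symm
  have hF0 : F (2*k-2) P {d', x0} {b', x0} = 0 := by
    have hcd : ({d', x0} : Finset (Fin n)).card = 2 := Finset.card_pair hdx
    have hcb : ({b', x0} : Finset (Fin n)).card = 2 := Finset.card_pair hbx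
    rw [hF _ _ hcd hcb, if_neg]
    intro h
    have : d' ∈ ({b', x0} : Finset (Fin n)) := by rw [← h]; simp
    simp only [Finset.mem_insert, Finset.mem_singleton] at this
    rcases this with h' | h'
    · exact hbd h'.symm
    · exact hdx h'
  -- split of the master sum
  have hsplit : T1a + T1b = ∑ x : Fin n,
      if x ∈ W then 0 else c x * F (2*k-2) P {d', x} {b', x} := by
    rw [hT1a, hT1b, ← Finset.sum_add_distrib]
    refine Finset.sum_congr rfl fun x _ => ?_
    by_cases hx : x ∈ W
    · rw [if_pos hx]
      rw [Finset.sum_eq_zero fun E _ => by rw [if_neg (by tauto)],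
        Finset.sum_eq_zero fun E _ => by rw [if_neg (by tauto)], add_zero]
    · rw [if_neg hx]
      unfold F
      rw [Finset.mul_sum, ← Finset.sum_add_distrib]
      refine Finset.sum_congr rfl fun E _ => ?_
      by_cases hg : E.card = 2*k-2 ∧ Disjoint E ({d', x} ∪ {b', x})
      · by_cases hx0 : x0 ∈ E
        · rw [if_neg (by tauto), if_pos ⟨hx, hx0, hg.1, hg.2⟩, if_pos hg, zero_add, hGdef]
        · rw [if_pos ⟨hx, hx0, hg.1, hg.2⟩, if_neg (by tauto), if_pos hg, add_zero, hGdef]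
      · rw [if_neg (by tauto), if_neg (by tauto), if_neg hg, mul_zero, add_zero]
  have hT1zero : T1a + T1b = 0 := by
    rw [hsplit]
    refine Finset.sum_eq_zero fun x _ => ?_
    by_cases hx : x ∈ W
    · rw [if_pos hx]
    · rw [if_neg hx, hFx x hx, mul_zero]
  -- T1b is proportional to F S0 T0 = 0
  have hT1bzero : T1b = 0 := by
    have key : T1b = ((2*k-2 : ℕ) : ℝ) * (-1) * F (2*k-2) P {d', x0} {b', x0} := by
      unfold F
      rw [Finset.mul_sum]
      have rhs_step : ∀ E' : Finset (Fin n),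
          ((2*k-2 : ℕ) : ℝ) * (-1) *
            (if E'.card = 2*k-2 ∧ Disjoint E' ({d', x0} ∪ {b', x0}) then
              shuffleSign E' {d', x0} * shuffleSign E' {b', x0} *
                P (E' ∪ {d', x0}) (E' ∪ {b', x0}) else 0)
          = ∑ x : Fin n, if x ∈ E' ∧ E'.card = 2*k-2 ∧ Disjoint E' ({d', x0} ∪ {b', x0}) then
              (-1) * (shuffleSign E' {d', x0} * shuffleSign E' {b', x0} *
                P (E' ∪ {d', x0}) (E' ∪ {b', x0})) else 0 := by
        intro E'
        by_cases hg : E'.card = 2*k-2 ∧ Disjoint E' ({d', x0} ∪ {b', x0})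
        · rw [if_pos hg]
          have : ∀ x : Fin n, (if x ∈ E' ∧ E'.card = 2*k-2 ∧ Disjoint E' ({d', x0} ∪ {b', x0}) then
              (-1) * (shuffleSign E' {d', x0} * shuffleSign E' {b', x0} *
                P (E' ∪ {d', x0}) (E' ∪ {b', x0})) else 0)
              = if x ∈ E' then (-1) * (shuffleSign E' {d', x0} * shuffleSign E' {b', x0} *
                P (E' ∪ {d', x0}) (E' ∪ {b', x0})) else 0 := by
            intro x
            by_cases hx : x ∈ E'
            · rw [if_pos ⟨hx, hg⟩, if_pos hx]
            · rw [if_neg (by tauto), if_neg hx]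
          rw [Finset.sum_congr rfl fun x _ => this x, Finset.sum_ite_mem, Finset.univ_inter,
            Finset.sum_const, nsmul_eq_mul, hg.1]
          ring
        · rw [if_neg hg, mul_zero]
          rw [Finset.sum_eq_zero fun x _ => by rw [if_neg (by tauto)]]
      rw [Finset.sum_congr rfl fun E' _ => rhs_step E', Finset.sum_comm, hT1b]
      refine Finset.sum_congr rfl fun x _ => ?_
      -- reindex E' = insert x (E.erase x0), i.e. E = insert x0 (E'.erase x)
      have lhs_shape : ∀ E : Finset (Fin n),
          (if x ∉ W ∧ x0 ∈ E ∧ E.card = 2*k-2 ∧ Disjoint E ({d', x} ∪ {b', x}) then G x E else 0)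
          = if x0 ∈ E then (if x ∉ W ∧ E.card = 2*k-2 ∧ Disjoint E ({d', x} ∪ {b', x})
              then G x E else 0) else 0 := by
        intro E
        by_cases h0 : x0 ∈ E
        · by_cases hg : x ∉ W ∧ E.card = 2*k-2 ∧ Disjoint E ({d', x} ∪ {b', x})
          · rw [if_pos ⟨hg.1, h0, hg.2.1, hg.2.2⟩, if_pos h0, if_pos hg]
          · rw [if_neg (by tauto), if_pos h0, if_neg hg]
        · rw [if_neg (by tauto), if_neg h0]
      have rhs_shape : ∀ E' : Finset (Fin n),
          (if x ∈ E' ∧ E'.card = 2*k-2 ∧ Disjoint E' ({d', x0} ∪ {b', x0}) then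
            (-1) * (shuffleSign E' {d', x0} * shuffleSign E' {b', x0} *
              P (E' ∪ {d', x0}) (E' ∪ {b', x0})) else 0)
          = if x ∈ E' then (if E'.card = 2*k-2 ∧ Disjoint E' ({d', x0} ∪ {b', x0}) then
              (-1) * (shuffleSign E' {d', x0} * shuffleSign E' {b', x0} *
                P (E' ∪ {d', x0}) (E' ∪ {b', x0})) else 0) else 0 := by
        intro E'
        by_cases h0 : x ∈ E'
        · by_cases hg : E'.card = 2*k-2 ∧ Disjoint E' ({d', x0} ∪ {b', x0})
          · rw [if_pos ⟨h0, hg⟩, if_pos h0, if_pos hg]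
          · rw [if_neg (by tauto), if_pos h0, if_neg hg]
        · rw [if_neg (by tauto), if_neg h0]
      rw [Finset.sum_congr rfl fun E _ => lhs_shape E,
        Finset.sum_congr rfl fun E' _ => rhs_shape E',
        sum_mem_reindex x0 _, sum_mem_reindex x _]
      refine Finset.sum_congr rfl fun Ge _ => ?_
      -- now terms over the common core Ge
      by_cases h0 : x0 ∈ Ge
      · rw [if_neg (by tauto)]
        by_cases h1 : x ∈ Ge
        · rw [if_neg (by tauto)]
        · rw [if_pos h1, if_neg]
          rintro ⟨-, hd⟩
          exact Finset.disjoint_left.mp hd (Finset.mem_insert_of_mem h0) (by simp)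
      · rw [if_pos h0]
        by_cases h1 : x ∈ Ge
        · have hL : ¬(x ∉ W ∧ (insert x0 Ge).card = 2*k-2 ∧
              Disjoint (insert x0 Ge) ({d', x} ∪ {b', x})) := by
            rintro ⟨-, -, hd⟩
            exact Finset.disjoint_left.mp hd (Finset.mem_insert_of_mem h1)
              (by simp [Finset.mem_union, Finset.mem_insert])
          rw [if_neg hL, if_neg (fun hc : x ∉ Ge => hc h1)]
        · rw [if_pos h1]
          -- both sides now over core Ge with inserted points
          by_cases hg : x ∉ W ∧ Ge.card + 1 = 2*k-2 ∧ x0 ∉ Ge ∧ x ∉ Ge ∧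
              Disjoint Ge ({b', d', x0, x} : Finset (Fin n))
          · have hxw := (hxW x).mp hg.1
            have hgd : ∀ a ∈ Ge, a ≠ b' ∧ a ≠ d' ∧ a ≠ x0 ∧ a ≠ x := by
              intro a ha
              have := Finset.disjoint_left.mp hg.2.2.2.2 ha
              simp only [Finset.mem_insert, Finset.mem_singleton] at this
              tauto
            have guard1 : (insert x0 Ge).card = 2*k-2 ∧
                Disjoint (insert x0 Ge) ({d', x} ∪ {b', x}) := by
              constructor
              · rw [Finset.card_insert_of_notMem hg.2.2.1]; omega
              · simp only [Finset.disjoint_left, Finset.mem_insert, Finset.mem_union,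
                  Finset.mem_singleton]
                rintro a ha hmem
                rcases ha with rfl | ha
                · rcases hmem with (h | h) | (h | h)
                  exacts [hdx h.symm, hxw.2.2 h.symm, hbx h.symm, hxw.2.2 h.symm]
                · have hfacts := hgd a ha
                  rcases hmem with (h | h) | (h | h)
                  exacts [hfacts.2.1 h, hfacts.2.2.2 h, hfacts.1 h, hfacts.2.2.2 h]
            have guard2 : (insert x Ge).card = 2*k-2 ∧
                Disjoint (insert x Ge) ({d', x0} ∪ {b', x0}) := by
              constructor
              · rw [Finset.card_insert_of_notMem hg.2.2.2.1]; omega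
              · simp only [Finset.disjoint_left, Finset.mem_insert, Finset.mem_union,
                  Finset.mem_singleton]
                rintro a ha hmem
                rcases ha with rfl | ha
                · rcases hmem with (h | h) | (h | h)
                  exacts [hxw.2.1 h, hxw.2.2 h, hxw.1 h, hxw.2.2 h]
                · have hfacts := hgd a ha
                  rcases hmem with (h | h) | (h | h)
                  exacts [hfacts.2.1 h, hfacts.2.2.1 h, hfacts.1 h, hfacts.2.2.1 h]
            rw [if_pos ⟨hg.1, guard1.1, guard1.2⟩, if_pos ⟨guard2.1, guard2.2⟩]
            -- value identity
            have hPeq1 : insert x0 Ge ∪ ({d', x} : Finset (Fin n))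
                = insert x Ge ∪ ({d', x0} : Finset (Fin n)) := by
              ext a
              simp only [Finset.mem_union, Finset.mem_insert, Finset.mem_singleton]
              tauto
            have hPeq2 : insert x0 Ge ∪ ({b', x} : Finset (Fin n))
                = insert x Ge ∪ ({b', x0} : Finset (Fin n)) := by
              ext a
              simp only [Finset.mem_union, Finset.mem_insert, Finset.mem_singleton]
              tauto
            rw [hGdef]
            dsimp only
            rw [hPeq1, hPeq2]
            -- expand signs
            have hd1 : ∀ y : Fin n, y ∉ Ge → ∀ z : Fin n,
                shuffleSign (insert y Ge) {z} = shuffleSign {y} {z} * shuffleSign Ge {z} := by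
              intro y hy z
              rw [Finset.insert_eq, s_union_left _ (by simp [Finset.disjoint_left, hy])]
            have pair : ∀ (u v : Fin n), (insert u {v} : Finset (Fin n)) = {u} ∪ {v} :=
              fun u v => Finset.insert_eq u {v}
            have expand : ∀ (X : Finset (Fin n)) (u v : Fin n), u ≠ v →
                shuffleSign X {u, v} = shuffleSign X {u} * shuffleSign X {v} := by
              intro X u v huv
              refine (pair u v) ▸ s_union_right X ?_
              simp only [Finset.disjoint_left, Finset.mem_singleton]
              rintro a rfl h
              exact huv h
            rw [expand _ d' x (Ne.symm hxw.2.1), expand _ b' x (Ne.symm hxw.1),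
              expand _ d' x0 hdx, expand _ b' x0 hbx]
            rw [hd1 x0 h0 d', hd1 x0 h0 b', hd1 x0 h0 x,
              hd1 x h1 d', hd1 x h1 b', hd1 x h1 x0]
            rw [hcdef]
            dsimp only
            have r1 : shuffleSign {d'} {x0} * shuffleSign {x0} {d'} = -1 := by
              rw [s_comm (by simp [Finset.disjoint_left, hdx])]; simp
            have r2 : shuffleSign {b'} {x0} * shuffleSign {x0} {b'} = -1 := by
              rw [s_comm (by simp [Finset.disjoint_left, hbx])]; simp
            have q1 := s_mul_self ({x0} : Finset (Fin n)) {x}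
            have q2 := s_mul_self Ge ({x} : Finset (Fin n))
            have q3 := s_mul_self ({x} : Finset (Fin n)) {x0}
            have q4 := s_mul_self Ge ({x0} : Finset (Fin n))
            set A1 := shuffleSign Ge ({d'} : Finset (Fin n))
            set A2 := shuffleSign Ge ({b'} : Finset (Fin n))
            set Pv := P (insert x Ge ∪ {d', x0}) (insert x Ge ∪ {b', x0})
            set D1 := shuffleSign ({x} : Finset (Fin n)) {b'}
            set D2 := shuffleSign ({x} : Finset (Fin n)) {d'}
            set C1 := shuffleSign ({d'} : Finset (Fin n)) {x0}
            set C2 := shuffleSign ({b'} : Finset (Fin n)) {x0}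
            set X1 := shuffleSign ({x0} : Finset (Fin n)) {d'}
            set X2 := shuffleSign ({x0} : Finset (Fin n)) {b'}
            set X3 := shuffleSign ({x0} : Finset (Fin n)) {x}
            set G3 := shuffleSign Ge ({x} : Finset (Fin n))
            set G4 := shuffleSign Ge ({x0} : Finset (Fin n))
            set D3 := shuffleSign ({x} : Finset (Fin n)) {x0}
            linear_combination (-(D1*D2*A1*A2*Pv*C2*X2*X3*X3*G3*G3))*r1
              + (D1*D2*A1*A2*Pv*X3*X3*G3*G3)*r2 - (D1*D2*A1*A2*Pv*G3*G3)*q1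
              - (D1*D2*A1*A2*Pv)*q2 + (D1*D2*A1*A2*Pv*G4*G4)*q3 + (D1*D2*A1*A2*Pv)*q4
          · -- guards fail on both sides
            rw [if_neg, if_neg]
            · rintro ⟨hc, hd⟩
              refine hg ?_
              have hx0G : x0 ∉ Ge := h0
              have hxG : x ∉ Ge := h1
              have hxw : x ∉ W := by
                rw [hxW]
                have h := Finset.disjoint_left.mp hd (Finset.mem_insert_self x Ge)
                simp only [Finset.mem_union, Finset.mem_insert, Finset.mem_singleton] at h
                push_neg at h
                exact ⟨h.2.1, h.1.1, h.1.2⟩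
              refine ⟨hxw, by rw [Finset.card_insert_of_notMem hxG] at hc; omega,
                hx0G, hxG, ?_⟩
              simp only [Finset.disjoint_left, Finset.mem_insert, Finset.mem_singleton]
              intro a ha
              have h := Finset.disjoint_left.mp hd (Finset.mem_insert_of_mem ha)
              simp only [Finset.mem_union, Finset.mem_insert, Finset.mem_singleton] at h
              push_neg at h
              push_neg
              exact ⟨h.2.1, h.1.1, h.1.2, fun hax => hxG (hax ▸ ha)⟩
            · rintro ⟨hw, hc, hd⟩
              refine hg ⟨hw, by rw [Finset.card_insert_of_notMem h0] at hc; omega, h0, h1, ?_⟩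
              simp only [Finset.disjoint_left, Finset.mem_insert, Finset.mem_singleton]
              intro a ha
              have h := Finset.disjoint_left.mp hd (Finset.mem_insert_of_mem ha)
              simp only [Finset.mem_union, Finset.mem_insert, Finset.mem_singleton] at h
              push_neg at h
              push_neg
              exact ⟨h.2.1, h.1.1, fun hax => h0 (hax ▸ ha), h.1.2⟩
    rw [key, hF0, mul_zero]
  have hT1azero : T1a = 0 := by linarith [hT1zero, hT1bzero]
  have hBW : B ⊆ W := by
    rw [hBdef, hWdef]
    intro a ha
    simp only [Finset.mem_insert, Finset.mem_singleton] at ha ⊢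
    tauto
  have hDW : D ⊆ W := by
    rw [hDdef, hWdef]
    intro a ha
    simp only [Finset.mem_insert, Finset.mem_singleton] at ha ⊢
    tauto
  have hBD : B ∪ D = W := by
    rw [hBdef, hDdef, hWdef]
    ext a
    simp only [Finset.mem_union, Finset.mem_insert, Finset.mem_singleton]
    tauto
  have key2 : (2*(k:ℝ) - 1) * Qd k P B D = T1a := by
    unfold Qd
    rw [Finset.mul_sum]
    have step1 : ∀ U : Finset (Fin n),
        (2*(k:ℝ)-1) * (if U.card = 2*k+2 ∧ B ⊆ U ∧ D ⊆ U then
          shuffleSign (U \ B) B * shuffleSign (U \ D) D * P (U \ B) (U \ D) else 0)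
        = ∑ x : Fin n, if x ∈ U ∧ x ∉ W ∧ U.card = 2*k+2 ∧ B ⊆ U ∧ D ⊆ U then
            shuffleSign (U \ B) B * shuffleSign (U \ D) D * P (U \ B) (U \ D) else 0 := by
      intro U
      by_cases hg : U.card = 2*k+2 ∧ B ⊆ U ∧ D ⊆ U
      · rw [if_pos hg]
        have hWU : W ⊆ U := by rw [← hBD]; exact Finset.union_subset hg.2.1 hg.2.2
        have hcard : (U \ W).card = 2*k-1 := by
          rw [Finset.card_sdiff_of_subset hWU, hWcard, hg.1]
          omega
        have hshape : ∀ x : Fin n,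
            (if x ∈ U ∧ x ∉ W ∧ U.card = 2*k+2 ∧ B ⊆ U ∧ D ⊆ U then
              shuffleSign (U \ B) B * shuffleSign (U \ D) D * P (U \ B) (U \ D) else 0)
            = if x ∈ U \ W then
              shuffleSign (U \ B) B * shuffleSign (U \ D) D * P (U \ B) (U \ D) else 0 := by
          intro x
          by_cases hx : x ∈ U \ W
          · rw [Finset.mem_sdiff] at hx
            rw [if_pos ⟨hx.1, hx.2, hg.1, hg.2.1, hg.2.2⟩, if_pos (Finset.mem_sdiff.mpr hx)]
          · rw [Finset.mem_sdiff] at hx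
            push_neg at hx
            rw [if_neg, if_neg (fun hc => (Finset.mem_sdiff.mp hc).2 (hx (Finset.mem_sdiff.mp hc).1))]
            rintro ⟨h1, h2, -⟩
            exact h2 (hx h1)
        rw [Finset.sum_congr rfl fun x _ => hshape x, Finset.sum_ite_mem, Finset.univ_inter,
          Finset.sum_const, nsmul_eq_mul, hcard]
        have hcast : ((2*k-1 : ℕ) : ℝ) = 2*(k:ℝ) - 1 := by
          push_cast [show 1 ≤ 2*k by omega]; ring
        rw [hcast]
      · rw [if_neg hg, mul_zero]
        rw [Finset.sum_eq_zero fun x _ => by rw [if_neg (by tauto)]]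
    rw [Finset.sum_congr rfl fun U _ => step1 U, Finset.sum_comm, hT1a]
    refine Finset.sum_congr rfl fun x _ => ?_
    by_cases hxw : x ∈ W
    · rw [Finset.sum_eq_zero fun U _ => by rw [if_neg (by tauto)],
        Finset.sum_eq_zero fun E _ => by rw [if_neg (by tauto)]]
    · set g : Finset (Fin n) → ℝ := fun U =>
        if U.card = 2*k+2 then
          shuffleSign (U \ B) B * shuffleSign (U \ D) D * P (U \ B) (U \ D) else 0 with hgdef
      have shape : ∀ U : Finset (Fin n),
          (if x ∈ U ∧ x ∉ W ∧ U.card = 2*k+2 ∧ B ⊆ U ∧ D ⊆ U then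
            shuffleSign (U \ B) B * shuffleSign (U \ D) D * P (U \ B) (U \ D) else 0)
          = if insert x W ⊆ U then g U else 0 := by
        intro U
        by_cases hs : insert x W ⊆ U
        · have hmem : x ∈ U ∧ B ⊆ U ∧ D ⊆ U := by
            rw [Finset.insert_subset_iff] at hs
            exact ⟨hs.1, hBW.trans hs.2, hDW.trans hs.2⟩
          rw [if_pos hs, hgdef]
          dsimp only
          by_cases hc : U.card = 2*k+2
          · rw [if_pos ⟨hmem.1, hxw, hc, hmem.2.1, hmem.2.2⟩, if_pos hc]
          · rw [if_neg (by tauto), if_neg hc]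
        · rw [if_neg, if_neg hs]
          rintro ⟨h1, -, -, h4, h5⟩
          exact hs (Finset.insert_subset_iff.mpr ⟨h1, hBD ▸ Finset.union_subset h4 h5⟩)
      rw [Finset.sum_congr rfl fun U _ => shape U, ← sum_union_reindex (insert x W) g]
      refine Finset.sum_congr rfl fun E _ => ?_
      have hxw' := (hxW x).mp hxw
      by_cases hd : Disjoint E (insert x W)
      · rw [if_pos hd, hgdef]
        dsimp only
        have hEfacts : ∀ a ∈ E, a ≠ x ∧ a ≠ b' ∧ a ≠ d' ∧ a ≠ x0 := by
          intro a ha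
          have h := Finset.disjoint_left.mp hd ha
          rw [hWdef] at h
          simp only [Finset.mem_insert, Finset.mem_singleton] at h
          push_neg at h
          exact h
        have hxE : x ∉ E := fun h => (hEfacts x h).1 rfl
        have hx0E : x0 ∉ E := fun h => (hEfacts x0 h).2.2.2 rfl
        have hcardU : (E ∪ insert x W).card = E.card + 4 := by
          rw [Finset.card_union_of_disjoint hd, Finset.card_insert_of_notMem hxw, hWcard]
        have hUB : (E ∪ insert x W) \ B = E ∪ {d', x} := by
          rw [hBdef, hWdef]
          ext a
          simp only [Finset.mem_sdiff, Finset.mem_union, Finset.mem_insert, Finset.mem_singleton]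
          constructor
          · rintro ⟨ha | ha, hb⟩
            · exact Or.inl ha
            · push_neg at hb
              rcases ha with rfl | rfl | rfl | rfl
              · exact Or.inr (Or.inr rfl)
              · exact absurd rfl hb.1
              · exact Or.inr (Or.inl rfl)
              · exact absurd rfl hb.2
          · rintro (ha | rfl | rfl)
            · have := hEfacts a ha
              exact ⟨Or.inl ha, by push_neg; exact ⟨this.2.1, this.2.2.2⟩⟩
            · exact ⟨Or.inr (Or.inr (Or.inr (Or.inl rfl))), by push_neg; exact ⟨hbd.symm, hdx⟩⟩
            · exact ⟨Or.inr (Or.inl rfl), by push_neg; exact ⟨hxw'.1, hxw'.2.2⟩⟩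
        have hUD : (E ∪ insert x W) \ D = E ∪ {b', x} := by
          rw [hDdef, hWdef]
          ext a
          simp only [Finset.mem_sdiff, Finset.mem_union, Finset.mem_insert, Finset.mem_singleton]
          constructor
          · rintro ⟨ha | ha, hb⟩
            · exact Or.inl ha
            · push_neg at hb
              rcases ha with rfl | rfl | rfl | rfl
              · exact Or.inr (Or.inr rfl)
              · exact Or.inr (Or.inl rfl)
              · exact absurd rfl hb.1
              · exact absurd rfl hb.2
          · rintro (ha | rfl | rfl)
            · have := hEfacts a ha
              exact ⟨Or.inl ha, by push_neg; exact ⟨this.2.2.1, this.2.2.2⟩⟩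
            · exact ⟨Or.inr (Or.inr (Or.inl rfl)), by push_neg; exact ⟨hbd, hbx⟩⟩
            · exact ⟨Or.inr (Or.inl rfl), by push_neg; exact ⟨hxw'.2.1, hxw'.2.2⟩⟩
        have hdE2 : Disjoint E ({d', x} ∪ {b', x}) := by
          simp only [Finset.disjoint_left, Finset.mem_union, Finset.mem_insert,
            Finset.mem_singleton]
          intro a ha hmem
          have := hEfacts a ha
          rcases hmem with (h | h) | (h | h)
          exacts [this.2.2.1 h, this.1 h, this.2.1 h, this.1 h]
        by_cases hEc : E.card = 2*k-2
        · rw [if_pos (show (E ∪ insert x W).card = 2*k+2 by omega),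
            if_pos ⟨hxw, hx0E, hEc, hdE2⟩, hUB, hUD, hGdef]
          dsimp only
          have hdEd : Disjoint E ({d', x} : Finset (Fin n)) := by
            simp only [Finset.disjoint_left, Finset.mem_insert, Finset.mem_singleton]
            intro a ha hmem
            have := hEfacts a ha
            rcases hmem with h | h
            exacts [this.2.2.1 h, this.1 h]
          have hdEb : Disjoint E ({b', x} : Finset (Fin n)) := by
            simp only [Finset.disjoint_left, Finset.mem_insert, Finset.mem_singleton]
            intro a ha hmem
            have := hEfacts a ha
            rcases hmem with h | h
            exacts [this.2.1 h, this.1 h]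
          have expand : ∀ (X : Finset (Fin n)) (u v : Fin n), u ≠ v →
              shuffleSign X {u, v} = shuffleSign X {u} * shuffleSign X {v} := by
            intro X u v huv
            refine (Finset.insert_eq u {v}) ▸ s_union_right X ?_
            simp only [Finset.disjoint_left, Finset.mem_singleton]
            rintro a rfl h
            exact huv h
          have expandL : ∀ (u v : Fin n) (Y : Finset (Fin n)), u ≠ v →
              shuffleSign ({u, v} : Finset (Fin n)) Y
                = shuffleSign {u} Y * shuffleSign {v} Y := by
            intro u v Y huv
            refine (Finset.insert_eq u {v}) ▸ s_union_left Y ?_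
            simp only [Finset.disjoint_left, Finset.mem_singleton]
            rintro a rfl h
            exact huv h
          rw [s_union_left B hdEd, s_union_left D hdEb, hBdef, hDdef, hcdef]
          dsimp only
          rw [expand E b' x0 hbx, expand E d' x0 hdx,
            expandL d' x _ (fun h => hxw'.2.1 h.symm), expandL b' x _ (fun h => hxw'.1 h.symm),
            expand {d'} b' x0 hbx, expand {x} b' x0 hbx,
            expand {b'} d' x0 hdx, expand {x} d' x0 hdx,
            expand E d' x (fun h => hxw'.2.1 h.symm), expand E b' x (fun h => hxw'.1 h.symm)]
          have r : shuffleSign ({d'} : Finset (Fin n)) {b'}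
              * shuffleSign ({b'} : Finset (Fin n)) {d'} = -1 := by
            rw [s_comm (by simp [Finset.disjoint_left, hbd]; exact fun h => hbd h.symm)]
            simp
          have q1 := s_mul_self E ({x0} : Finset (Fin n))
          have q2 := s_mul_self ({x} : Finset (Fin n)) ({x0} : Finset (Fin n))
          have q3 := s_mul_self E ({x} : Finset (Fin n))
          set K := shuffleSign E {b'} * shuffleSign E {d'} * shuffleSign {x} {b'}
            * shuffleSign {x} {d'} * shuffleSign {d'} {x0} * shuffleSign {b'} {x0}
            * P (E ∪ {d', x}) (E ∪ {b', x}) with hK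
          linear_combination (K * shuffleSign {x} {x0} * shuffleSign {x} {x0}
              * shuffleSign {d'} {b'} * shuffleSign {b'} {d'}) * q1
            + (K * shuffleSign {d'} {b'} * shuffleSign {b'} {d'}) * q2 + K * r + K * q3
        · rw [if_neg (by omega), if_neg]
          rintro ⟨-, -, h, -⟩
          exact hEc h
      · rw [if_neg hd, if_neg]
        rintro ⟨-, hx0E, -, hdE⟩
        refine hd ?_
        simp only [Finset.disjoint_left, hWdef, Finset.mem_insert, Finset.mem_singleton]
        intro a ha
        have h := Finset.disjoint_left.mp hdE ha
        simp only [Finset.mem_union, Finset.mem_insert, Finset.mem_singleton] at h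
        push_neg at h
        push_neg
        exact ⟨h.1.2, h.2.1, h.1.1, fun hax => hx0E (hax ▸ ha)⟩
  have hk1 : (2*(k:ℝ) - 1) ≠ 0 := by
    have : (1:ℝ) ≤ (k:ℝ) := by exact_mod_cast hk
    linarith
  have : Qd k P B D = 0 := by
    rw [hT1azero] at key2
    exact (mul_eq_zero.mp key2).resolve_left hk1
  exact this

end DF
end Aux7
section Aux8
open Finset
namespace DF
variable {n : ℕ}

open scoped Classical
set_option maxHeartbeats 1000000

lemma F_empty (m : ℕ) (ω : DF n) :
    F m ω ∅ ∅ = ∑ E : Finset (Fin n), if E.card = m then ω E E else 0 := by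
  unfold F
  refine Finset.sum_congr rfl fun E _ => ?_
  rw [Finset.union_empty, Finset.union_empty, s_empty_right]
  by_cases h : E.card = m
  · rw [if_pos ⟨h, Finset.disjoint_empty_right E⟩, if_pos h, one_mul, one_mul]
  · rw [if_neg (by tauto), if_neg h]

lemma powerset_sum (U : Finset (Fin n)) (f : Finset (Fin n) → ℝ) :
    (∑ B ∈ U.powerset, f B) = ∑ B : Finset (Fin n), if B ⊆ U then f B else 0 := by
  rw [← Finset.sum_filter]
  congr 1
  ext B
  simp [Finset.mem_powerset]

lemma mul_diag_expand (P θ : DF n) (U : Finset (Fin n)) :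
    mul P θ U U = ∑ B ∈ U.powerset, ∑ D ∈ U.powerset,
      shuffleSign (U \ B) B * shuffleSign (U \ D) D * P (U \ B) (U \ D) * θ B D := by
  unfold mul
  refine Finset.sum_nbij' (fun A => U \ A) (fun B => U \ B) ?_ ?_ ?_ ?_ ?_
  · intro A hA; exact Finset.mem_powerset.mpr (Finset.sdiff_subset)
  · intro B hB; exact Finset.mem_powerset.mpr (Finset.sdiff_subset)
  · intro A hA; exact Finset.sdiff_sdiff_eq_self (Finset.mem_powerset.mp hA)
  · intro B hB; exact Finset.sdiff_sdiff_eq_self (Finset.mem_powerset.mp hB)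
  · intro A hA
    refine Finset.sum_nbij' (fun C => U \ C) (fun D => U \ D) ?_ ?_ ?_ ?_ ?_
    · intro C hC; exact Finset.mem_powerset.mpr (Finset.sdiff_subset)
    · intro D hD; exact Finset.mem_powerset.mpr (Finset.sdiff_subset)
    · intro C hC; exact Finset.sdiff_sdiff_eq_self (Finset.mem_powerset.mp hC)
    · intro D hD; exact Finset.sdiff_sdiff_eq_self (Finset.mem_powerset.mp hD)
    · intro C hC
      rw [Finset.sdiff_sdiff_eq_self (Finset.mem_powerset.mp hA),
        Finset.sdiff_sdiff_eq_self (Finset.mem_powerset.mp hC)]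

lemma expansion (k : ℕ) (P θ : DF n) :
    (∑ U : Finset (Fin n), if U.card = 2*k+2 then mul P θ U U else 0)
    = ∑ B : Finset (Fin n), ∑ D : Finset (Fin n), θ B D * Qd k P B D := by
  have step1 : ∀ U : Finset (Fin n),
      (if U.card = 2*k+2 then mul P θ U U else 0)
      = ∑ B : Finset (Fin n), ∑ D : Finset (Fin n),
          if U.card = 2*k+2 ∧ B ⊆ U ∧ D ⊆ U then
            θ B D * (shuffleSign (U \ B) B * shuffleSign (U \ D) D * P (U \ B) (U \ D))
          else 0 := by
    intro U
    by_cases hc : U.card = 2*k+2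
    · rw [if_pos hc, mul_diag_expand]
      rw [powerset_sum U]
      refine Finset.sum_congr rfl fun B _ => ?_
      by_cases hB : B ⊆ U
      · rw [if_pos hB, powerset_sum U]
        refine Finset.sum_congr rfl fun D _ => ?_
        by_cases hD : D ⊆ U
        · rw [if_pos hD, if_pos ⟨hc, hB, hD⟩]; ring
        · rw [if_neg hD, if_neg (by tauto)]
      · rw [if_neg hB]
        rw [Finset.sum_eq_zero fun D _ => by rw [if_neg (by tauto)]]
    · rw [if_neg hc]
      rw [Finset.sum_eq_zero fun B _ => Finset.sum_eq_zero fun D _ => by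
        rw [if_neg (by tauto)]]
  rw [Finset.sum_congr rfl fun U _ => step1 U]
  rw [Finset.sum_comm]
  refine Finset.sum_congr rfl fun B _ => ?_
  rw [Finset.sum_comm]
  refine Finset.sum_congr rfl fun D _ => ?_
  unfold Qd
  rw [Finset.mul_sum]
  refine Finset.sum_congr rfl fun U _ => ?_
  by_cases hg : U.card = 2*k+2 ∧ B ⊆ U ∧ D ⊆ U
  · rw [if_pos hg, if_pos hg]
  · rw [if_neg hg, if_neg hg, mul_zero]

end DF
end Aux8
set_option maxHeartbeats 1000000 in
/-- If `R` is `(2k−2,k)`-Einstein, i.e. `c^{2k−2}R^k = λ·g²`, with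
`k ≥ 1` and `2k+2 ≤ n`, then
`h_{2k+2} = (2k(2k−1)/(n(n−1)) + (n−4k)/n)·h_{2k}·h₂`. -/
theorem stmt6_einstein_gaussBonnet
    (n k : ℕ) (hk : 1 ≤ k) (hkn : 2 * k + 2 ≤ n)
    (V : Type*) [NormedAddCommGroup V] [InnerProductSpace ℝ V]
    (hV : Module.finrank ℝ V = n)
    (e : OrthonormalBasis (Fin n) ℝ V)
    (R : V → V → V → V → ℝ) (hR : IsCurv R)
    (hEin : ∃ lam : ℝ,
      DF.contrN (2 * k - 2) (DF.pow (ofCurv e R) k) = lam • DF.pow (DF.gm n) 2) :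
    h2kDF (k + 1) (ofCurv e R) =
      ((2 * (k : ℝ) * (2 * (k : ℝ) - 1)) / ((n : ℝ) * ((n : ℝ) - 1))
          + ((n : ℝ) - 4 * (k : ℝ)) / (n : ℝ)) *
        h2kDF k (ofCurv e R) * (scalDF (ofCurv e R) / 2) := by
  classical
  obtain ⟨lam, hEin⟩ := hEin
  set Rd : DF n := ofCurv e R with hRdDef
  set P : DF n := DF.pow Rd k with hPDef
  have hRdDeg : DF.IsDeg 2 Rd := ofCurv_isDeg e R
  have hn4 : 4 ≤ n := by omega
  set μ : ℝ := 2 * lam / (((2*k-2).factorial : ℕ) : ℝ) with hmu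
  have hfac : (((2*k-2).factorial : ℕ) : ℝ) ≠ 0 :=
    Nat.cast_ne_zero.mpr (Nat.factorial_ne_zero _)
  have hF : ∀ S T : Finset (Fin n), S.card = 2 → T.card = 2 →
      DF.F (2*k-2) P S T = if S = T then μ else 0 := by
    intro S T hS hT
    have h1 := congr_fun (congr_fun hEin S) T
    rw [show 2*k - 2 = 2*k-2 from rfl] at h1
    rw [DF.contrN_eq_F] at h1
    have h2 : (lam • DF.pow (DF.gm n) 2) S T
        = lam * (if S = T ∧ S.card = 2 then 2 else 0) := by
      rw [Pi.smul_apply, Pi.smul_apply, smul_eq_mul, DF.gm2_apply]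
    rw [h2] at h1
    by_cases hST : S = T
    · rw [if_pos hST]
      rw [if_pos ⟨hST, hS⟩] at h1
      rw [hmu]
      field_simp
      linarith [h1]
    · rw [if_neg hST]
      rw [if_neg (by tauto), mul_zero] at h1
      exact (mul_eq_zero.mp h1).resolve_left hfac
  -- off-diagonal coefficients vanish
  have hQd0 : ∀ B D : Finset (Fin n), B.card = 2 → D.card = 2 → B ≠ D →
      DF.Qd k P B D = 0 := by
    intro B D hB hD hne
    by_cases hdisj : Disjoint B D
    · exact DF.Qd_offdiag_disj hk hF B D hB hD hdisj
    · rw [Finset.not_disjoint_iff] at hdisj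
      obtain ⟨x0, hxB, hxD⟩ := hdisj
      have hB' : ∃ b', b' ≠ x0 ∧ B = {b', x0} := by
        obtain ⟨u, v, huv, rfl⟩ := Finset.card_eq_two.mp hB
        simp only [Finset.mem_insert, Finset.mem_singleton] at hxB
        rcases hxB with rfl | rfl
        · exact ⟨v, fun h => huv h.symm, Finset.pair_comm x0 v⟩
        · exact ⟨u, huv, rfl⟩
      have hD' : ∃ d', d' ≠ x0 ∧ D = {d', x0} := by
        obtain ⟨u, v, huv, rfl⟩ := Finset.card_eq_two.mp hD
        simp only [Finset.mem_insert, Finset.mem_singleton] at hxD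
        rcases hxD with rfl | rfl
        · exact ⟨v, fun h => huv h.symm, Finset.pair_comm x0 v⟩
        · exact ⟨u, huv, rfl⟩
      obtain ⟨b', hbx, rfl⟩ := hB'
      obtain ⟨d', hdx, rfl⟩ := hD'
      have hbd : b' ≠ d' := by
        rintro rfl
        exact hne rfl
      exact DF.Qd_offdiag_inter hk hF b' d' x0 hbd hbx hdx
  -- diagonal coefficients
  set qd0 : ℝ := μ * ((n:ℝ) - 2*k) * ((n:ℝ) - 2*k - 1) / (2*(k:ℝ) * (2*(k:ℝ) - 1))
    with hqd0
  have hQdd : ∀ B : Finset (Fin n), B.card = 2 → DF.Qd k P B B = qd0 :=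
    fun B hB => DF.Qd_diag_eq hk hn4 hF B hB
  -- the double sum
  have hsum : (∑ B : Finset (Fin n), ∑ D : Finset (Fin n), Rd B D * DF.Qd k P B D)
      = DF.Tot 1 Rd * qd0 := by
    have per : ∀ B : Finset (Fin n),
        (∑ D : Finset (Fin n), Rd B D * DF.Qd k P B D)
        = (if B.card = 2*1 then Rd B B else 0) * qd0 := by
      intro B
      by_cases hB2 : B.card = 2
      · rw [if_pos (by omega)]
        rw [Finset.sum_eq_single B]
        · rw [hQdd B hB2]
        · intro D _ hDB
          by_cases h0 : Rd B D = 0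
          · rw [h0, zero_mul]
          · rw [hQd0 B D hB2 (hRdDeg B D h0).2 (fun h => hDB h.symm), mul_zero]
        · intro h
          exact absurd (Finset.mem_univ B) h
      · rw [if_neg (by omega), zero_mul]
        refine Finset.sum_eq_zero fun D _ => ?_
        by_cases h0 : Rd B D = 0
        · rw [h0, zero_mul]
        · exact absurd (hRdDeg B D h0).1 hB2
    rw [Finset.sum_congr rfl fun B _ => per B, ← Finset.sum_mul]
    rfl
  -- identification of the curvature quantities
  have hfac2k : (((2*k).factorial : ℕ) : ℝ) ≠ 0 :=
    Nat.cast_ne_zero.mpr (Nat.factorial_ne_zero _)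
  have hfac2k2 : (((2*(k+1)).factorial : ℕ) : ℝ) ≠ 0 :=
    Nat.cast_ne_zero.mpr (Nat.factorial_ne_zero _)
  have hfac2 : ((Nat.factorial 2 : ℕ) : ℝ) ≠ 0 :=
    Nat.cast_ne_zero.mpr (Nat.factorial_ne_zero _)
  have hh2k : h2kDF k Rd = DF.Tot k P := by
    unfold h2kDF DF.toScalar
    rw [DF.contrN_eq_F, DF.F_empty, mul_div_cancel_left₀ _ hfac2k]
    rfl
  have hh2k2 : h2kDF (k+1) Rd
      = ∑ B : Finset (Fin n), ∑ D : Finset (Fin n), Rd B D * DF.Qd k P B D := by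
    unfold h2kDF DF.toScalar
    rw [DF.contrN_eq_F, DF.F_empty, mul_div_cancel_left₀ _ hfac2k2]
    rw [← DF.expansion k P Rd]
    have hpow : DF.pow Rd (k+1) = DF.mul P Rd := rfl
    rw [hpow]
    refine Finset.sum_congr rfl fun E _ => ?_
    have : E.card = 2*(k+1) ↔ E.card = 2*k+2 := by omega
    by_cases h : E.card = 2*k+2
    · rw [if_pos (this.mpr h), if_pos h]
    · rw [if_neg (fun hc => h (this.mp hc)), if_neg h]
  have hscal : scalDF Rd = 2 * DF.Tot 1 Rd := by
    unfold scalDF DF.toScalar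
    rw [DF.contrN_eq_F, DF.F_empty]
    have h2 : ((Nat.factorial 2 : ℕ) : ℝ) = 2 := by norm_num [Nat.factorial]
    rw [h2]
    unfold DF.Tot
    simp only [show (2*1 : ℕ) = 2 from rfl]
  have hTot := DF.Tot_eq (μ := μ) (P := P) hk (by omega) hF
  -- final arithmetic
  have hk1 : (1:ℝ) ≤ (k:ℝ) := by exact_mod_cast hk
  have hd1 : 2*(k:ℝ) - 1 ≠ 0 := by linarith
  have hd2 : 2*(k:ℝ) ≠ 0 := by linarith
  have hn0 : (n:ℝ) ≠ 0 := by
    have : (4:ℝ) ≤ (n:ℝ) := by exact_mod_cast hn4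
    linarith
  have hn1 : (n:ℝ) - 1 ≠ 0 := by
    have : (4:ℝ) ≤ (n:ℝ) := by exact_mod_cast hn4
    linarith
  have hTP : DF.Tot k P = (n:ℝ)*((n:ℝ)-1)*μ / (2*(k:ℝ)*(2*(k:ℝ)-1)) := by
    rw [eq_div_iff (by exact mul_ne_zero hd2 hd1)]
    linarith [hTot]
  rw [hh2k2, hsum, hh2k, hscal, hTP, hqd0]
  field_simp
  ring
end
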